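/- arXiv:1707.05766 — 4 statements merged into one kernel-verified Lean document; each statement's English description precedes it below -/
import Mathlib

section
/- (Montgomery's Lemma) There holds: for every N ≥ 1, every collection of points x_1, …, x_N ∈ 𝕋², and all real numbers X_1, X_2 ≥ 0, one has Σ_{k ∈ ℤ², |k_1| ≤ X_1, |k_2| ≤ X_2} |Σ_{n=1}^N e^{2πi⟨k, x_n⟩}|² ≥ N · X_1 · X_2. -/
open scoped Real BigOperators
open MeasureTheory

open scoped ComplexConjugate
open Finset

noncomputable section

/-- The `d`-dimensional torus `ℝ^d/ℤ^d`. -/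
abbrev Torus (d : ℕ) := Fin d → AddCircle (1 : ℝ)

/-- The character `e^{2πi⟨k,x⟩}` for `k ∈ ℤ^d`, `x ∈ 𝕋^d`. -/
def torusChar {d : ℕ} (k : Fin d → ℤ) (x : Torus d) : ℂ := ∏ m, fourier (k m) (x m)


def mChar (p : ℤ × ℤ) (y : Torus 2) : ℂ := fourier p.1 (y 0) * fourier p.2 (y 1)

lemma fourier_mul_conj (n : ℤ) (t : AddCircle (1:ℝ)) : fourier n t * conj (fourier n t) = 1 := by
  rw [← fourier_neg, ← fourier_add, add_neg_cancel, fourier_zero]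

lemma mChar_sub (a b : ℤ × ℤ) (y : Torus 2) :
    mChar (a - b) y = mChar a y * conj (mChar b y) := by
  show fourier (a.1 - b.1) (y 0) * fourier (a.2 - b.2) (y 1) = _
  simp only [mChar, sub_eq_add_neg, fourier_add, fourier_neg, map_mul]
  ring

lemma mChar_mul_conj (a : ℤ × ℤ) (y : Torus 2) : mChar a y * conj (mChar a y) = 1 := by
  simp only [mChar, map_mul]
  rw [mul_mul_mul_comm, fourier_mul_conj, fourier_mul_conj, one_mul]

lemma torusChar_eq (k : Fin 2 → ℤ) (y : Torus 2) : torusChar k y = mChar (k 0, k 1) y := by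
  simp [torusChar, mChar, Fin.prod_univ_two]

lemma montgomery_core (N : ℕ) (x : Fin N → Torus 2) (K₁ K₂ : ℕ) :
    (N : ℝ) * ((K₁ + 1) * (K₂ + 1)) ≤
      ∑ p ∈ Finset.Icc (-(K₁:ℤ)) K₁ ×ˢ Finset.Icc (-(K₂:ℤ)) K₂,
        Complex.normSq (∑ n, mChar p (x n)) := by
  classical
  set A : Finset (ℤ × ℤ) := Finset.Icc (0:ℤ) K₁ ×ˢ Finset.Icc (0:ℤ) K₂ with hA
  set Box : Finset (ℤ × ℤ) := Finset.Icc (-(K₁:ℤ)) K₁ ×ˢ Finset.Icc (-(K₂:ℤ)) K₂ with hBox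
  set S : ℤ × ℤ → ℂ := fun p => ∑ n, mChar p (x n) with hS
  set D : Fin N → Fin N → ℂ := fun m n => ∑ a ∈ A, mChar a (x m) * conj (mChar a (x n)) with hD
  have cardA : A.card = (K₁ + 1) * (K₂ + 1) := by
    simp [hA, Int.card_Icc]
  -- the quadruple-sum term
  set t : ℤ × ℤ → ℤ × ℤ → Fin N → Fin N → ℂ :=
    fun a b m n => (mChar a (x m) * conj (mChar a (x n))) *
      (conj (mChar b (x m)) * mChar b (x n)) with ht
  -- complex identity
  have key1 : ∀ a b : ℤ × ℤ, S (a - b) * conj (S (a - b)) = ∑ m, ∑ n, t a b m n := by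
    intro a b
    rw [hS]
    simp only [map_sum]
    rw [Finset.sum_mul_sum]
    refine Finset.sum_congr rfl fun m _ => Finset.sum_congr rfl fun n _ => ?_
    simp only [mChar_sub, map_mul, RingHom.map_mul, Complex.conj_conj, ht]
    ring
  have key2 : ∀ m n : Fin N, D m n * conj (D m n) = ∑ a ∈ A, ∑ b ∈ A, t a b m n := by
    intro m n
    rw [hD]
    simp only [map_sum, map_mul, Complex.conj_conj]
    rw [Finset.sum_mul_sum]
  have swap : ∑ a ∈ A, ∑ b ∈ A, ∑ m, ∑ n, t a b m n
      = ∑ m, ∑ n, ∑ a ∈ A, ∑ b ∈ A, t a b m n := by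
    calc ∑ a ∈ A, ∑ b ∈ A, ∑ m, ∑ n, t a b m n
        = ∑ a ∈ A, ∑ m, ∑ b ∈ A, ∑ n, t a b m n :=
          Finset.sum_congr rfl fun a _ => Finset.sum_comm
      _ = ∑ m, ∑ a ∈ A, ∑ b ∈ A, ∑ n, t a b m n := Finset.sum_comm
      _ = ∑ m, ∑ a ∈ A, ∑ n, ∑ b ∈ A, t a b m n :=
          Finset.sum_congr rfl fun m _ => Finset.sum_congr rfl fun a _ => Finset.sum_comm
      _ = ∑ m, ∑ n, ∑ a ∈ A, ∑ b ∈ A, t a b m n :=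
          Finset.sum_congr rfl fun m _ => Finset.sum_comm
  have cx_id : ∑ a ∈ A, ∑ b ∈ A, S (a - b) * conj (S (a - b))
      = ∑ m, ∑ n, D m n * conj (D m n) := by
    simp_rw [key1, key2]; exact swap
  -- real identity
  have real_id : ∑ a ∈ A, ∑ b ∈ A, Complex.normSq (S (a - b))
      = ∑ m : Fin N, ∑ n : Fin N, Complex.normSq (D m n) := by
    have := cx_id
    simp_rw [Complex.mul_conj] at this
    exact_mod_cast this
  -- diagonal lower bound
  have diag : ∀ m : Fin N, D m m = (A.card : ℂ) := by
    intro m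
    rw [hD]
    simp [mChar_mul_conj]
  have lower : (N : ℝ) * ((K₁ + 1) * (K₂ + 1))^2
      ≤ ∑ m : Fin N, ∑ n : Fin N, Complex.normSq (D m n) := by
    have h1 : ∀ m : Fin N, ((K₁ + 1) * (K₂ + 1) : ℝ)^2 ≤ ∑ n, Complex.normSq (D m n) := by
      intro m
      have h2 : Complex.normSq (D m m) ≤ ∑ n, Complex.normSq (D m n) :=
        Finset.single_le_sum (fun n _ => Complex.normSq_nonneg _) (Finset.mem_univ m)
      rw [diag m] at h2
      rw [Complex.normSq_natCast, cardA] at h2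
      calc ((K₁ + 1) * (K₂ + 1) : ℝ)^2 = ((K₁+1)*(K₂+1) : ℕ) * ((K₁+1)*(K₂+1) : ℕ) := by
            push_cast; ring
        _ ≤ _ := h2
    calc (N : ℝ) * ((K₁ + 1) * (K₂ + 1))^2
        = ∑ _m : Fin N, ((K₁ + 1) * (K₂ + 1) : ℝ)^2 := by
          rw [Finset.sum_const, Finset.card_univ, Fintype.card_fin, nsmul_eq_mul]
      _ ≤ _ := Finset.sum_le_sum fun m _ => h1 m
  -- upper bound by box sum
  have upper : ∑ a ∈ A, ∑ b ∈ A, Complex.normSq (S (a - b))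
      ≤ (A.card : ℝ) * ∑ p ∈ Box, Complex.normSq (S p) := by
    have hsub : ∀ b ∈ A, ∑ a ∈ A, Complex.normSq (S (a - b))
        ≤ ∑ p ∈ Box, Complex.normSq (S p) := by
      intro b hb
      have himg : ∑ p ∈ A.image (fun a => a - b), Complex.normSq (S p)
          = ∑ a ∈ A, Complex.normSq (S (a - b)) :=
        Finset.sum_image (g := fun a => a - b) (f := fun p => Complex.normSq (S p))
          (fun a _ a' _ h => by simpa using h)
      rw [← himg]
      refine Finset.sum_le_sum_of_subset_of_nonneg ?_ (fun _ _ _ => Complex.normSq_nonneg _)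
      intro p hp
      simp only [Finset.mem_image] at hp
      obtain ⟨a, ha, rfl⟩ := hp
      simp only [hA, hBox, Finset.mem_product, Finset.mem_Icc] at ha hb ⊢
      have h1 : (a - b).1 = a.1 - b.1 := rfl
      have h2 : (a - b).2 = a.2 - b.2 := rfl
      rw [h1, h2]
      constructor <;> constructor <;> omega
    rw [Finset.sum_comm]
    calc ∑ b ∈ A, ∑ a ∈ A, Complex.normSq (S (a - b))
        ≤ ∑ _b ∈ A, ∑ p ∈ Box, Complex.normSq (S p) := Finset.sum_le_sum hsub
      _ = (A.card : ℝ) * ∑ p ∈ Box, Complex.normSq (S p) := by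
          rw [Finset.sum_const, nsmul_eq_mul]
  -- combine
  have hpos : (0:ℝ) < ((K₁ + 1) * (K₂ + 1) : ℝ) := by positivity
  have final : (N : ℝ) * ((K₁ + 1) * (K₂ + 1))^2
      ≤ (A.card : ℝ) * ∑ p ∈ Box, Complex.normSq (S p) :=
    (lower.trans real_id.ge).trans upper
  rw [cardA] at final
  push_cast at final
  nlinarith [final, hpos]

/-- Montgomery's Lemma. -/
theorem montgomery_lemma (N : ℕ) (hN : 1 ≤ N) (x : Fin N → Torus 2)
    (X₁ X₂ : ℝ) (hX₁ : 0 ≤ X₁) (hX₂ : 0 ≤ X₂) :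
    (N : ℝ) * X₁ * X₂ ≤
      ∑' k : {k : Fin 2 → ℤ // |(k 0 : ℝ)| ≤ X₁ ∧ |(k 1 : ℝ)| ≤ X₂},
        ‖∑ n, torusChar k.1 (x n)‖ ^ 2 := by
  classical
  set K₁ := ⌊X₁⌋₊ with hK₁
  set K₂ := ⌊X₂⌋₊ with hK₂
  set Box : Finset (ℤ × ℤ) := Finset.Icc (-(K₁:ℤ)) K₁ ×ˢ Finset.Icc (-(K₂:ℤ)) K₂ with hBox
  -- integer bound from real bound
  have intbd : ∀ (z : ℤ) (X : ℝ), 0 ≤ X → |(z : ℝ)| ≤ X → |z| ≤ (⌊X⌋₊ : ℤ) := by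
    intro z X hX h
    have h1 : |z| ≤ ⌊X⌋ := Int.le_floor.mpr (by rwa [Int.cast_abs])
    have h2 : ⌊X⌋.toNat = ⌊X⌋₊ := Int.floor_toNat X
    have h3 : 0 ≤ ⌊X⌋ := Int.floor_nonneg.mpr hX
    omega
  -- finiteness of the index type
  haveI : Finite {k : Fin 2 → ℤ // |(k 0 : ℝ)| ≤ X₁ ∧ |(k 1 : ℝ)| ≤ X₂} := by
    have hfin : {k : Fin 2 → ℤ | |(k 0 : ℝ)| ≤ X₁ ∧ |(k 1 : ℝ)| ≤ X₂}.Finite := by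
      set M : ℤ := max (K₁ : ℤ) (K₂ : ℤ) with hM
      apply Set.Finite.subset (Set.Finite.pi (fun _ : Fin 2 => Set.finite_Icc (-M) M))
      intro k hk
      simp only [Set.mem_setOf_eq] at hk
      have b0 : |k 0| ≤ M := le_trans (intbd _ _ hX₁ hk.1) (le_max_left _ _)
      have b1 : |k 1| ≤ M := le_trans (intbd _ _ hX₂ hk.2) (le_max_right _ _)
      intro i _
      fin_cases i
      · exact Set.mem_Icc.mpr (abs_le.mp b0)
      · exact Set.mem_Icc.mpr (abs_le.mp b1)
    exact hfin.to_subtype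
  have hsummable : Summable (fun k : {k : Fin 2 → ℤ // |(k 0 : ℝ)| ≤ X₁ ∧ |(k 1 : ℝ)| ≤ X₂} =>
      ‖∑ n, torusChar k.1 (x n)‖ ^ 2) := Summable.of_finite
  -- membership of box elements
  have memP : ∀ p ∈ Box, |((![p.1, p.2] : Fin 2 → ℤ) 0 : ℝ)| ≤ X₁ ∧
      |((![p.1, p.2] : Fin 2 → ℤ) 1 : ℝ)| ≤ X₂ := by
    intro p hp
    simp only [hBox, Finset.mem_product, Finset.mem_Icc] at hp
    simp only [Matrix.cons_val_zero, Matrix.cons_val_one, Matrix.head_cons]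
    constructor
    · rw [← Int.cast_abs]
      calc ((|p.1| : ℤ) : ℝ) ≤ ((K₁ : ℤ) : ℝ) := by
            exact_mod_cast abs_le.mpr ⟨hp.1.1, hp.1.2⟩
        _ ≤ X₁ := by push_cast; exact Nat.floor_le hX₁
    · rw [← Int.cast_abs]
      calc ((|p.2| : ℤ) : ℝ) ≤ ((K₂ : ℤ) : ℝ) := by
            exact_mod_cast abs_le.mpr ⟨hp.2.1, hp.2.2⟩
        _ ≤ X₂ := by push_cast; exact Nat.floor_le hX₂
  -- embedding Box → subtype
  set T : Finset {k : Fin 2 → ℤ // |(k 0 : ℝ)| ≤ X₁ ∧ |(k 1 : ℝ)| ≤ X₂} :=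
    Box.attach.map ⟨fun q => ⟨![q.1.1, q.1.2], memP q.1 q.2⟩, by
      intro q q' h
      simp only [Subtype.mk.injEq] at h
      have h0 := congrFun h 0
      have h1 := congrFun h 1
      simp only [Matrix.cons_val_zero, Matrix.cons_val_one, Matrix.head_cons] at h0 h1
      exact Subtype.ext (Prod.ext h0 h1)⟩ with hT
  have hTsum : ∑ k ∈ T, ‖∑ n, torusChar k.1 (x n)‖ ^ 2
      = ∑ p ∈ Box, Complex.normSq (∑ n, mChar p (x n)) := by
    rw [hT, Finset.sum_map]
    calc ∑ q ∈ Box.attach, ‖∑ n, torusChar (![q.1.1, q.1.2] : Fin 2 → ℤ) (x n)‖ ^ 2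
        = ∑ q ∈ Box.attach, Complex.normSq (∑ n, mChar q.1 (x n)) := by
          refine Finset.sum_congr rfl fun q _ => ?_
          have he : ∀ n, torusChar (![q.1.1, q.1.2] : Fin 2 → ℤ) (x n) = mChar q.1 (x n) := by
            intro n
            rw [torusChar_eq]
            simp only [Matrix.cons_val_zero, Matrix.cons_val_one, Matrix.head_cons]
          simp_rw [he]
          rw [← Complex.sq_norm]
      _ = ∑ p ∈ Box, Complex.normSq (∑ n, mChar p (x n)) :=
          Finset.sum_attach Box fun p => Complex.normSq (∑ n, mChar p (x n))
  have step1 : ∑ p ∈ Box, Complex.normSq (∑ n, mChar p (x n))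
      ≤ ∑' k : {k : Fin 2 → ℤ // |(k 0 : ℝ)| ≤ X₁ ∧ |(k 1 : ℝ)| ≤ X₂},
        ‖∑ n, torusChar k.1 (x n)‖ ^ 2 := by
    rw [← hTsum]
    exact Summable.sum_le_tsum T (fun k _ => by positivity) hsummable
  refine le_trans ?_ (le_trans (montgomery_core N x K₁ K₂) step1)
  have l1 : X₁ ≤ (K₁ : ℝ) + 1 := le_of_lt (Nat.lt_floor_add_one X₁)
  have l2 : X₂ ≤ (K₂ : ℝ) + 1 := le_of_lt (Nat.lt_floor_add_one X₂)
  have hN0 : (0:ℝ) ≤ N := Nat.cast_nonneg N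
  have l3 : X₁ * X₂ ≤ ((K₁:ℝ) + 1) * ((K₂:ℝ) + 1) := mul_le_mul l1 l2 hX₂ (by positivity)
  calc (N:ℝ) * X₁ * X₂ = (N:ℝ) * (X₁ * X₂) := by ring
    _ ≤ (N:ℝ) * (((K₁:ℝ) + 1) * ((K₂:ℝ) + 1)) := mul_le_mul_of_nonneg_left l3 hN0
end
end

section
/- (Theorem 2) There exists a universal constant c > 0 such that for every N ≥ 2 and every collection of points x_1, …, x_N ∈ 𝕋², one has Σ_{i,j=1, i ≠ j}^N 1 / (1 + N ‖x_i − x_j‖²) ≥ c · N · log N. -/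
open scoped Real BigOperators
open MeasureTheory

noncomputable section
set_option maxHeartbeats 2000000

/-- The torus (Euclidean) distance `min_{m ∈ ℤ^d} |x - y - m|`; each coordinate can be
minimized independently, giving the square root of the sum of squared circle distances. -/
def torusDist {d : ℕ} (x y : Torus d) : ℝ := Real.sqrt (∑ m, ‖x m - y m‖ ^ 2)

section Aux
open Finset

lemma my_norm_le_half (a : AddCircle (1:ℝ)) : ‖a‖ ≤ 1/2 := by
  induction a using QuotientAddGroup.induction_on with
  | H x => rw [AddCircle.norm_eq]; simpa using abs_sub_round x

def myRep (a : AddCircle (1:ℝ)) : ℝ := (AddCircle.equivIco 1 0 a : ℝ)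

lemma myRep_mem (a : AddCircle (1:ℝ)) : myRep a ∈ Set.Ico (0:ℝ) 1 := by
  simpa [myRep] using (AddCircle.equivIco 1 0 a).2

lemma coe_myRep (a : AddCircle (1:ℝ)) : ((myRep a : ℝ) : AddCircle (1:ℝ)) = a :=
  (AddCircle.equivIco 1 0).symm_apply_apply a

lemma norm_sub_le_abs_myRep (a b : AddCircle (1:ℝ)) : ‖a - b‖ ≤ |myRep a - myRep b| := by
  have h : a - b = ((myRep a - myRep b : ℝ) : AddCircle (1:ℝ)) := by
    conv_lhs => rw [← coe_myRep a, ← coe_myRep b]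
    norm_cast
  rw [h]
  exact (QuotientAddGroup.norm_mk_le_norm (m := (myRep a - myRep b))).trans (Real.norm_eq_abs _).le

lemma abs_lt_one_of_floor_eq {u v : ℝ} (h : ⌊u⌋ = ⌊v⌋) : |u - v| < 1 := by
  have h1 := Int.floor_le u; have h2 := Int.lt_floor_add_one u
  have h3 := Int.floor_le v; have h4 := Int.lt_floor_add_one v
  have hc : ((⌊u⌋ : ℤ) : ℝ) = ((⌊v⌋ : ℤ) : ℝ) := by exact_mod_cast h
  rw [abs_sub_lt_iff]; constructor <;> linarith

lemma norm_le_of_cell_eq {M : ℕ} (hM : 0 < M) {a b : AddCircle (1:ℝ)}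
    (h : ⌊(M:ℝ) * myRep a⌋ = ⌊(M:ℝ) * myRep b⌋) : ‖a - b‖ ≤ 1 / M := by
  have hMR : (0:ℝ) < M := by exact_mod_cast hM
  have h1 : |(M:ℝ) * myRep a - (M:ℝ) * myRep b| < 1 := abs_lt_one_of_floor_eq h
  have h2 : (M:ℝ) * |myRep a - myRep b| < 1 := by
    rwa [← mul_sub, abs_mul, abs_of_pos hMR] at h1
  have h3 : |myRep a - myRep b| ≤ 1 / M := by
    rw [le_div_iff₀ hMR]; nlinarith
  exact (norm_sub_le_abs_myRep a b).trans h3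

lemma count_close {N M : ℕ} (c : Fin N → ℤ × ℤ)
    (hc : ∀ i, c i ∈ (Finset.Ico (0:ℤ) M) ×ˢ (Finset.Ico (0:ℤ) M))
    (P : Finset (Fin N × Fin N))
    (hP : ∀ p : Fin N × Fin N, c p.1 = c p.2 → p ∈ P) :
    (N:ℝ)^2 ≤ (M:ℝ)^2 * P.card := by
  classical
  set S : Finset (ℤ × ℤ) := (Finset.Ico (0:ℤ) M) ×ˢ (Finset.Ico (0:ℤ) M) with hS
  set n : ℤ × ℤ → ℕ := fun γ => (univ.filter (fun i => c i = γ)).card with hn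
  have hsum : ∑ γ ∈ S, n γ = N := by
    have := (Finset.card_eq_sum_card_fiberwise (fun (i : Fin N) (_ : i ∈ univ) => hc i)).symm
    simpa using this
  have hdisj : ∀ γ ∈ S, ∀ δ ∈ S, γ ≠ δ →
      Disjoint ((univ.filter (fun i => c i = γ)) ×ˢ (univ.filter (fun i => c i = γ)))
               ((univ.filter (fun i => c i = δ)) ×ˢ (univ.filter (fun i => c i = δ))) := by
    intro γ _ δ _ hne
    rw [Finset.disjoint_left]
    rintro ⟨i, j⟩ h1 h2
    simp only [Finset.mem_product, Finset.mem_filter] at h1 h2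
    exact hne (h1.1.2 ▸ h2.1.2 ▸ rfl)
  have hcard : ∑ γ ∈ S, n γ ^ 2 =
      (S.biUnion (fun γ => (univ.filter (fun i => c i = γ)) ×ˢ (univ.filter (fun i => c i = γ)))).card := by
    rw [Finset.card_biUnion hdisj]
    refine Finset.sum_congr rfl fun γ _ => ?_
    rw [Finset.card_product]; ring
  have hsub : (S.biUnion (fun γ => (univ.filter (fun i => c i = γ)) ×ˢ (univ.filter (fun i => c i = γ)))).card ≤ P.card := by
    apply Finset.card_le_card
    intro p hp
    simp only [Finset.mem_biUnion, Finset.mem_product, Finset.mem_filter] at hp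
    obtain ⟨γ, _, ⟨_, h1⟩, ⟨_, h2⟩⟩ := hp
    exact hP p (h1.trans h2.symm)
  have hCS : (∑ γ ∈ S, (n γ : ℝ))^2 ≤ (S.card : ℝ) * ∑ γ ∈ S, (n γ : ℝ)^2 := by
    exact_mod_cast sq_sum_le_card_mul_sum_sq (s := S) (f := fun γ => (n γ : ℝ))
  have hScard : (S.card : ℝ) = (M:ℝ)^2 := by
    rw [hS, Finset.card_product, Int.card_Ico]; push_cast; simp [sq]
  have h1 : (∑ γ ∈ S, (n γ : ℝ)) = N := by exact_mod_cast hsum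
  have h2 : (∑ γ ∈ S, (n γ : ℝ)^2) ≤ (P.card : ℝ) := by
    exact_mod_cast hcard ▸ hsub
  calc (N:ℝ)^2 = (∑ γ ∈ S, (n γ : ℝ))^2 := by rw [h1]
    _ ≤ (S.card : ℝ) * ∑ γ ∈ S, (n γ : ℝ)^2 := hCS
    _ ≤ (M:ℝ)^2 * P.card := by rw [hScard]; exact mul_le_mul_of_nonneg_left h2 (by positivity)

lemma geom_quarter (j n : ℕ) : ∑ k ∈ Finset.Icc j n, (1/4:ℝ)^k ≤ (4/3) * (1/4)^j := by
  rw [← Finset.Ico_add_one_right_eq_Icc, Finset.sum_Ico_eq_sum_range]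
  have : ∀ i, (1/4:ℝ)^(j+i) = (1/4)^j * (1/4)^i := fun i => pow_add _ _ _
  simp_rw [this, ← Finset.mul_sum]
  have hg : ∑ i ∈ Finset.range (n + 1 - j), (1/4:ℝ)^i ≤ 4/3 := by
    rw [geom_sum_eq (by norm_num)]
    have : (0:ℝ) ≤ (1/4:ℝ)^(n+1-j) := by positivity
    have h2 : (1/4:ℝ)^(n+1-j) ≤ 1 := pow_le_one₀ (by norm_num) (by norm_num)
    rw [div_le_iff_of_neg (by norm_num)]
    linarith
  calc (1/4:ℝ)^j * ∑ i ∈ Finset.range (n + 1 - j), (1/4:ℝ)^i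
      ≤ (1/4:ℝ)^j * (4/3) := mul_le_mul_of_nonneg_left hg (by positivity)
    _ = (4/3) * (1/4)^j := by ring

lemma key_pointwise (K : ℕ) (Nr s : ℝ) (hs : 0 ≤ s) (hN0 : 0 ≤ Nr) (hN : Nr ≤ 4^(K+1)) :
    ∑ k ∈ Finset.Icc 1 K, (2/99) * (1/4:ℝ)^k * (if s ≤ 2 * 4^k / 4^K then 1 else 0)
      ≤ 1 / (1 + Nr * s) := by
  classical
  have hpos : 0 < 1 + Nr * s := by nlinarith
  set A := (Finset.Icc 1 K).filter (fun k => s ≤ 2 * 4^k / 4^K) with hA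
  rcases A.eq_empty_or_nonempty with hE | hne
  · have : ∑ k ∈ Finset.Icc 1 K, (2/99) * (1/4:ℝ)^k * (if s ≤ 2 * 4^k / 4^K then 1 else 0) = 0 := by
      apply Finset.sum_eq_zero
      intro k hk
      have : ¬ (s ≤ 2 * 4^k / 4^K) := fun h => by
        have : k ∈ A := Finset.mem_filter.mpr ⟨hk, h⟩
        simp [hE] at this
      simp [this]
    rw [this]; positivity
  · set j := A.min' hne with hj
    have hjA : j ∈ A := A.min'_mem hne
    have hjI : j ∈ Finset.Icc 1 K := (Finset.mem_filter.mp hjA).1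
    have hjs : s ≤ 2 * 4^j / 4^K := (Finset.mem_filter.mp hjA).2
    have step1 : ∑ k ∈ Finset.Icc 1 K, (2/99) * (1/4:ℝ)^k * (if s ≤ 2 * 4^k / 4^K then 1 else 0)
        ≤ ∑ k ∈ Finset.Icc j K, (2/99) * (1/4:ℝ)^k := by
      have hsub : ∀ k ∈ Finset.Icc 1 K, (2/99) * (1/4:ℝ)^k * (if s ≤ 2 * 4^k / 4^K then 1 else 0)
          ≤ (if j ≤ k then (2/99) * (1/4:ℝ)^k else 0) := by
        intro k hk
        by_cases h : s ≤ 2 * 4^k / 4^K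
        · have : j ≤ k := A.min'_le k (Finset.mem_filter.mpr ⟨hk, h⟩)
          simp [h, this]
        · simp [h]; positivity
      calc _ ≤ ∑ k ∈ Finset.Icc 1 K, (if j ≤ k then (2/99) * (1/4:ℝ)^k else 0) :=
            Finset.sum_le_sum hsub
        _ = ∑ k ∈ (Finset.Icc 1 K).filter (fun k => j ≤ k), (2/99) * (1/4:ℝ)^k :=
            (Finset.sum_filter _ _).symm
        _ = ∑ k ∈ Finset.Icc j K, (2/99) * (1/4:ℝ)^k := by
            congr 1
            ext k
            simp only [Finset.mem_filter, Finset.mem_Icc]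
            have h1 : 1 ≤ j := (Finset.mem_Icc.mp hjI).1
            omega
    have step2 : ∑ k ∈ Finset.Icc j K, (2/99) * (1/4:ℝ)^k ≤ (8/297) * (1/4)^j := by
      rw [← Finset.mul_sum]
      have := geom_quarter j K
      nlinarith [this]
    have step3 : (8/297:ℝ) * (1/4)^j ≤ 1 / (1 + Nr * s) := by
      have hKj : j ≤ K := (Finset.mem_Icc.mp hjI).2
      have h4 : (0:ℝ) < 4^j := by positivity
      have h4K : (0:ℝ) < 4^K := by positivity
      have hub : 1 + Nr * s ≤ 9 * 4^j := by
        have h1 : Nr * s ≤ 4^(K+1) * (2 * 4^j / 4^K) :=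
          mul_le_mul hN hjs hs (by positivity)
        have h2 : (4:ℝ)^(K+1) * (2 * 4^j / 4^K) = 8 * 4^j := by
          rw [pow_succ]; field_simp; ring
        have h3 : (1:ℝ) ≤ 4^j := one_le_pow₀ (by norm_num)
        linarith
      have h9 : (0:ℝ) < 9 * 4^j := by positivity
      calc (8/297:ℝ) * (1/4)^j ≤ 1 / (9 * 4^j) := by
            rw [le_div_iff₀ h9]
            have e : ((8:ℝ)/297) * (1/4)^j * (9 * 4^j) = 72/297 := by
              rw [div_pow, one_pow]; field_simp; ring
            rw [e]; norm_num
        _ ≤ 1 / (1 + Nr * s) := one_div_le_one_div_of_le hpos hub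
    linarith

end Aux

/-- Theorem 2. -/
theorem theorem_two :
    ∃ c : ℝ, 0 < c ∧ ∀ (N : ℕ), 2 ≤ N → ∀ x : Fin N → Torus 2,
      c * N * Real.log N ≤
        ∑ i, ∑ j, if i = j then 0 else 1 / (1 + (N : ℝ) * torusDist (x i) (x j) ^ 2) := by
  classical
  refine ⟨1/200, by norm_num, ?_⟩
  intro N hN x
  set s : Fin N → Fin N → ℝ := fun i j => ∑ m, ‖x i m - x j m‖^2 with hs_def
  have hs0 : ∀ i j, 0 ≤ s i j := fun i j => by positivity
  have hsq : ∀ i j, torusDist (x i) (x j)^2 = s i j := fun i j =>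
    Real.sq_sqrt (by positivity)
  have hs_half : ∀ i j, s i j ≤ 1/2 := by
    intro i j
    have h0 := my_norm_le_half (x i 0 - x j 0)
    have h1 := my_norm_le_half (x i 1 - x j 1)
    have e : s i j = ‖x i 0 - x j 0‖^2 + ‖x i 1 - x j 1‖^2 := by
      rw [hs_def]; exact Fin.sum_univ_two _
    nlinarith [norm_nonneg (x i 0 - x j 0), norm_nonneg (x i 1 - x j 1)]
  -- reduce to a sum over the off-diagonal
  have key : ∑ p ∈ (Finset.univ (α := Fin N)).offDiag, (1:ℝ)/(1 + N * s p.1 p.2)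
      ≤ ∑ i, ∑ j, if i = j then 0 else 1 / (1 + (N : ℝ) * torusDist (x i) (x j) ^ 2) := by
    rw [← Finset.sum_product']
    have h1 : (Finset.univ (α := Fin N)).offDiag ⊆ Finset.univ ×ˢ Finset.univ := by
      intro p hp; simp [Finset.mem_product]
    refine le_trans (le_of_eq ?_) (Finset.sum_le_sum_of_subset_of_nonneg h1 ?_)
    · refine Finset.sum_congr rfl fun p hp => ?_
      have hne : p.1 ≠ p.2 := (Finset.mem_offDiag.mp hp).2.2
      rw [if_neg hne, hsq]
    · intro p _ _
      split
      · exact le_refl 0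
      · positivity
  refine le_trans ?_ key
  set D := ∑ p ∈ (Finset.univ (α := Fin N)).offDiag, (1:ℝ)/(1 + N * s p.1 p.2) with hD
  have hN0 : (0:ℝ) ≤ N := by positivity
  have hNpos : (0:ℝ) < N := by
    have : (2:ℝ) ≤ N := by exact_mod_cast hN
    linarith
  by_cases hN4 : N < 4
  · -- small case : N = 2 or 3
    have hterm : ∀ p ∈ (Finset.univ (α := Fin N)).offDiag,
        2/(2+(N:ℝ)) ≤ 1/(1 + N * s p.1 p.2) := by
      intro p _
      have hsh := hs_half p.1 p.2
      have hs0' := hs0 p.1 p.2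
      have h1 : 1 + (N:ℝ) * s p.1 p.2 ≤ (2+N)/2 := by nlinarith
      have h2 : (0:ℝ) < 1 + N * s p.1 p.2 := by nlinarith
      calc 2/(2+(N:ℝ)) = 1/((2+N)/2) := by
            rw [one_div_div]
        _ ≤ 1/(1 + N * s p.1 p.2) := one_div_le_one_div_of_le h2 h1
    have hcard : (((Finset.univ (α := Fin N)).offDiag.card : ℕ) : ℝ) = N*N - N := by
      rw [Finset.offDiag_card, Finset.card_univ, Fintype.card_fin]
      have hle : N ≤ N*N := Nat.le_mul_of_pos_left N (by omega)
      rw [Nat.cast_sub hle]; push_cast; ring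
    have hDge : ((N:ℝ)*N - N) * (2/(2+N)) ≤ D := by
      rw [hD]
      calc ((N:ℝ)*N - N) * (2/(2+N))
          = ∑ _p ∈ (Finset.univ (α := Fin N)).offDiag, 2/(2+(N:ℝ)) := by
            rw [Finset.sum_const, nsmul_eq_mul, hcard]
        _ ≤ _ := Finset.sum_le_sum hterm
    have hlog : Real.log N ≤ (N:ℝ) - 1 := Real.log_le_sub_one_of_pos hNpos
    have hN2R : (2:ℝ) ≤ N := by exact_mod_cast hN
    have hN3R : (N:ℝ) ≤ 3 := by exact_mod_cast Nat.lt_succ_iff.mp hN4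
    have h25 : (2:ℝ)/5 ≤ 2/(2+(N:ℝ)) := by
      rw [div_le_div_iff₀ (by norm_num) (by linarith)]
      linarith
    have hsq2 : (N:ℝ) ≤ (N:ℝ)*N - N := by nlinarith
    have hD2 : (N:ℝ) * (2/5) ≤ D := by
      refine le_trans ?_ hDge
      have h0 : (0:ℝ) ≤ 2/(2+(N:ℝ)) := by positivity
      nlinarith
    nlinarith [hD2, hlog]
  · -- large case : 4 ≤ N
    push_neg at hN4
    set K := Nat.log 4 N with hK
    have hK1 : 1 ≤ K := by
      rw [hK]
      exact (Nat.le_log_iff_pow_le (by norm_num) (by omega)).mpr (by simpa using hN4)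
    have hK1R : (1:ℝ) ≤ K := by exact_mod_cast hK1
    have h4K : (4:ℝ)^K ≤ N := by exact_mod_cast Nat.pow_log_le_self 4 (by omega)
    have hK4 : (N:ℝ) < 4^(K+1) := by exact_mod_cast Nat.lt_pow_succ_log_self (by norm_num) N
    set Fc : ℕ → ℕ := fun k =>
      ((Finset.univ (α := Fin N)).offDiag.filter (fun p => s p.1 p.2 ≤ 2 * 4^k / 4^K)).card
      with hFc
    -- Step A : pointwise dyadic decomposition
    have stepA : ∑ p ∈ (Finset.univ (α := Fin N)).offDiag,
        (∑ k ∈ Finset.Icc 1 K, (2/99) * (1/4:ℝ)^k *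
          (if s p.1 p.2 ≤ 2 * 4^k / 4^K then 1 else 0)) ≤ D := by
      rw [hD]
      refine Finset.sum_le_sum fun p _ => ?_
      exact key_pointwise K N (s p.1 p.2) (hs0 _ _) hN0 hK4.le
    rw [Finset.sum_comm] at stepA
    -- Step C : inner sums are counts
    have stepC : ∀ k ∈ Finset.Icc 1 K,
        ∑ p ∈ (Finset.univ (α := Fin N)).offDiag,
          (2/99) * (1/4:ℝ)^k * (if s p.1 p.2 ≤ 2 * 4^k / 4^K then 1 else 0)
        = (2/99) * (1/4:ℝ)^k * (Fc k : ℝ) := by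
      intro k _
      rw [← Finset.mul_sum, Finset.sum_boole, hFc]
    -- Step D : lower bound on the counts
    have stepD : ∀ k ∈ Finset.Icc 1 K, (N:ℝ) * 4^k - N ≤ (Fc k : ℝ) := by
      intro k hk
      obtain ⟨hk1, hkK⟩ := Finset.mem_Icc.mp hk
      set M := 2^(K-k) with hM
      have hMpos : 0 < M := Nat.pow_pos (by norm_num)
      have hMR : (0:ℝ) < M := by exact_mod_cast hMpos
      have hM2 : ((M:ℝ))^2 = 4^(K-k) := by
        rw [hM]; push_cast
        rw [← pow_mul, show (4:ℝ) = 2^2 by norm_num, ← pow_mul, Nat.mul_comm]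
      have hsplit : (4:ℝ)^K = 4^(K-k) * 4^k := by
        rw [← pow_add, Nat.sub_add_cancel hkK]
      have h4kk : (0:ℝ) < 4^(K-k) := by positivity
      have h4k : (0:ℝ) < 4^k := by positivity
      have ht : (2:ℝ)/((M:ℝ))^2 = 2 * 4^k / 4^K := by
        rw [hM2, hsplit]; field_simp
      set c : Fin N → ℤ × ℤ :=
        fun i => (⌊(M:ℝ) * myRep (x i 0)⌋, ⌊(M:ℝ) * myRep (x i 1)⌋) with hc_def
      have hc : ∀ i, c i ∈ (Finset.Ico (0:ℤ) M) ×ˢ (Finset.Ico (0:ℤ) M) := by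
        intro i
        simp only [hc_def, Finset.mem_product, Finset.mem_Ico]
        refine ⟨⟨?_, ?_⟩, ?_, ?_⟩ <;>
          first
          | exact Int.floor_nonneg.mpr (mul_nonneg hMR.le (myRep_mem _).1)
          | · rw [Int.floor_lt]; push_cast
              calc (M:ℝ) * myRep (x i _) < M * 1 :=
                    mul_lt_mul_of_pos_left (myRep_mem _).2 hMR
                _ = M := mul_one _
      set P := ((Finset.univ ×ˢ Finset.univ : Finset (Fin N × Fin N)).filter
        (fun p => s p.1 p.2 ≤ 2 * 4^k / 4^K)) with hPdef
      have hP : ∀ p : Fin N × Fin N, c p.1 = c p.2 → p ∈ P := by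
        intro p hcp
        rw [hPdef, Finset.mem_filter]
        refine ⟨by simp [Finset.mem_product], ?_⟩
        rw [← ht]
        rw [Prod.ext_iff] at hcp
        have e0 : ‖x p.1 0 - x p.2 0‖ ≤ 1/M := norm_le_of_cell_eq hMpos hcp.1
        have e1 : ‖x p.1 1 - x p.2 1‖ ≤ 1/M := norm_le_of_cell_eq hMpos hcp.2
        have e : s p.1 p.2 = ‖x p.1 0 - x p.2 0‖^2 + ‖x p.1 1 - x p.2 1‖^2 := by
          rw [hs_def]; exact Fin.sum_univ_two _
        have b0 : ‖x p.1 0 - x p.2 0‖^2 ≤ (1/(M:ℝ))^2 := by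
          nlinarith [norm_nonneg (x p.1 0 - x p.2 0)]
        have b1 : ‖x p.1 1 - x p.2 1‖^2 ≤ (1/(M:ℝ))^2 := by
          nlinarith [norm_nonneg (x p.1 1 - x p.2 1)]
        have hsum2 : (1/(M:ℝ))^2 + (1/(M:ℝ))^2 = 2/((M:ℝ))^2 := by
          field_simp
          norm_num
        rw [e]; linarith
      have hcount := count_close c hc P hP
      rw [hM2] at hcount
      have hsubset : P ⊆ ((Finset.univ (α := Fin N)).offDiag.filter
          (fun p => s p.1 p.2 ≤ 2 * 4^k / 4^K)) ∪ (Finset.univ (α := Fin N)).diag := by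
        intro p hp
        rw [hPdef, Finset.mem_filter] at hp
        by_cases hpe : p.1 = p.2
        · exact Finset.mem_union_right _ (Finset.mem_diag.mpr ⟨Finset.mem_univ _, hpe⟩)
        · exact Finset.mem_union_left _ (Finset.mem_filter.mpr
            ⟨Finset.mem_offDiag.mpr ⟨Finset.mem_univ _, Finset.mem_univ _, hpe⟩, hp.2⟩)
      have hcle : (P.card : ℝ) ≤ (Fc k : ℝ) + N := by
        have h1 := Finset.card_le_card hsubset
        have h2 := Finset.card_union_le ((Finset.univ (α := Fin N)).offDiag.filter
          (fun p => s p.1 p.2 ≤ 2 * 4^k / 4^K)) (Finset.univ (α := Fin N)).diag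
        have h3 : (Finset.univ (α := Fin N)).diag.card = N := by
          rw [Finset.diag_card, Finset.card_univ, Fintype.card_fin]
        have : P.card ≤ Fc k + N := by
          refine h1.trans (h2.trans ?_)
          simp [hFc, h3]
        exact_mod_cast this
      have hmul : (4:ℝ)^(K-k) * (P.card : ℝ) ≤ 4^(K-k) * ((Fc k : ℝ) + N) :=
        mul_le_mul_of_nonneg_left hcle h4kk.le
      have hNsq : (N:ℝ) * 4^K ≤ (N:ℝ)^2 := by nlinarith
      -- N * 4^(K-k) * 4^k = N * 4^K ≤ N^2 ≤ 4^(K-k) * P.card ≤ 4^(K-k)*(Fc k + N)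
      have hfin : (4:ℝ)^(K-k) * ((N:ℝ) * 4^k) ≤ 4^(K-k) * ((Fc k : ℝ) + N) := by
        calc (4:ℝ)^(K-k) * ((N:ℝ) * 4^k) = (N:ℝ) * 4^K := by rw [hsplit]; ring
          _ ≤ (N:ℝ)^2 := hNsq
          _ ≤ 4^(K-k) * (P.card : ℝ) := hcount
          _ ≤ _ := hmul
      have := (mul_le_mul_iff_right₀ h4kk).mp hfin
      linarith
    -- Step E : each dyadic level contributes at least N/66
    have stepE : (K:ℝ) * ((N:ℝ)/66) ≤
        ∑ k ∈ Finset.Icc 1 K, (2/99) * (1/4:ℝ)^k * (Fc k : ℝ) := by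
      have hterm : ∀ k ∈ Finset.Icc 1 K, (N:ℝ)/66 ≤ (2/99) * (1/4:ℝ)^k * (Fc k : ℝ) := by
        intro k hk
        obtain ⟨hk1, hkK⟩ := Finset.mem_Icc.mp hk
        have h1 := stepD k hk
        have hq0 : (0:ℝ) ≤ (1/4:ℝ)^k := by positivity
        have h2 : (1/4:ℝ)^k ≤ 1/4 := by
          calc (1/4:ℝ)^k ≤ (1/4:ℝ)^1 := pow_le_pow_of_le_one (by norm_num) (by norm_num) hk1
            _ = 1/4 := pow_one _
        have h3 : (1/4:ℝ)^k * 4^k = 1 := by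
          rw [← mul_pow]; norm_num
        have h4 := mul_le_mul_of_nonneg_left h1 hq0
        -- h4 : (1/4)^k * (N*4^k - N) ≤ (1/4)^k * Fc k
        nlinarith [mul_le_mul_of_nonneg_left h2 hN0]
      calc (K:ℝ) * ((N:ℝ)/66) = ∑ _k ∈ Finset.Icc 1 K, (N:ℝ)/66 := by
            rw [Finset.sum_const, nsmul_eq_mul, Nat.card_Icc]; norm_num
        _ ≤ _ := Finset.sum_le_sum hterm
    -- Step F : K controls log N
    have stepF : (1/200) * (N:ℝ) * Real.log N ≤ (K:ℝ) * ((N:ℝ)/66) := by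
      have hlogN : Real.log N ≤ (K+1 : ℝ) * Real.log 4 := by
        calc Real.log N ≤ Real.log ((4:ℝ)^(K+1)) := Real.log_le_log hNpos hK4.le
          _ = (K+1 : ℝ) * Real.log 4 := by rw [Real.log_pow]; push_cast; ring
      have hlog4 : Real.log 4 = 2 * Real.log 2 := by
        rw [show (4:ℝ) = 2^2 by norm_num, Real.log_pow]; push_cast; ring
      have hlog2 : Real.log 2 < 0.6931471808 := Real.log_two_lt_d9
      have hlog2' : (0:ℝ) < Real.log 2 := Real.log_pos (by norm_num)
      have h1 : Real.log N ≤ (K:ℝ) * 2.7725887232 := by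
        have hKp1 : (K:ℝ) + 1 ≤ 2 * K := by linarith
        nlinarith
      nlinarith [mul_le_mul_of_nonneg_left h1 hN0, mul_nonneg (Nat.cast_nonneg K : (0:ℝ) ≤ K) hN0]
    calc (1/200) * (N:ℝ) * Real.log N ≤ (K:ℝ) * ((N:ℝ)/66) := stepF
      _ ≤ ∑ k ∈ Finset.Icc 1 K, (2/99) * (1/4:ℝ)^k * (Fc k : ℝ) := stepE
      _ = ∑ k ∈ Finset.Icc 1 K, ∑ p ∈ (Finset.univ (α := Fin N)).offDiag,
            (2/99) * (1/4:ℝ)^k * (if s p.1 p.2 ≤ 2 * 4^k / 4^K then 1 else 0) :=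
          (Finset.sum_congr rfl stepC).symm
      _ ≤ D := stepA
end
end

section
/- (Lemma 1, Averaging Fejér Kernels) There exists a universal constant c > 0 such that for every integer N ≥ 0 and every x ∈ ℝ with |x| ≤ 1/2, one has (1/(N+1)) Σ_{k=0}^{N} F_k(x) ≥ c · N · log(e + N|x|) / (1 + N² x²). -/
open scoped Real BigOperators

noncomputable section

/-- The Fejér kernel `F_k(x) = Σ_{|j| ≤ k} (1 − |j|/(k+1)) e^{2πijx}` (a real number,
realized as the real part of the defining exponential sum). -/
def fejer (k : ℕ) (x : ℝ) : ℝ :=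
  (∑ j ∈ Finset.Icc (-(k : ℤ)) (k : ℤ),
      ((1 - |(j : ℝ)| / (k + 1) : ℝ) : ℂ) * Complex.exp (2 * π * Complex.I * j * x)).re

namespace FejerAux

def e (x : ℝ) (j : ℤ) : ℂ := Complex.exp (2 * π * Complex.I * j * x)

lemma e_zero (x : ℝ) : e x 0 = 1 := by simp [e]

lemma e_add (x : ℝ) (a b : ℤ) : e x (a + b) = e x a * e x b := by
  rw [e, e, e, ← Complex.exp_add]; congr 1; push_cast; ring

lemma conj_e (x : ℝ) (j : ℤ) : (starRingEnd ℂ) (e x j) = e x (-j) := by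
  rw [e, e, ← Complex.exp_conj]; congr 1; simp [Complex.ext_iff]

def geomS (x : ℝ) (M : ℕ) : ℂ := ∑ m ∈ Finset.range M, e x m

lemma key1 (x : ℝ) (k : ℕ) :
    geomS x (k+1) * (starRingEnd ℂ) (geomS x (k+1))
      = ((k : ℂ) + 1) + ∑ n ∈ Finset.range k, ((k - n : ℕ) : ℂ) * (e x (n+1) + e x (-(n+1))) := by
  induction k with
  | zero => simp [geomS, e_zero]
  | succ k ih =>
    have hG : geomS x (k+2) = geomS x (k+1) + e x (k+1) := by
      rw [geomS, geomS, Finset.sum_range_succ]; push_cast; ring_nf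
    have hcross1 : e x (k+1) * (starRingEnd ℂ) (geomS x (k+1))
        = ∑ n ∈ Finset.range (k+1), e x (n+1) := by
      rw [geomS, map_sum, Finset.mul_sum]
      rw [← Finset.sum_range_reflect (fun n => e x (n+1)) (k+1)]
      apply Finset.sum_congr rfl
      intro n hn
      simp only [Finset.mem_range] at hn
      rw [conj_e, ← e_add]
      congr 1
      omega
    have hcross2 : geomS x (k+1) * e x (-(k+1))
        = ∑ n ∈ Finset.range (k+1), e x (-(n+1)) := by
      rw [geomS, Finset.sum_mul]
      rw [← Finset.sum_range_reflect (fun n => e x (-(n+1))) (k+1)]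
      apply Finset.sum_congr rfl
      intro n hn
      simp only [Finset.mem_range] at hn
      rw [← e_add]
      congr 1
      omega
    have hlast : e x (k+1) * e x (-(k+1)) = 1 := by
      rw [← e_add]
      rw [show ((k:ℤ) + 1 + -((k:ℤ) + 1)) = 0 by ring, e_zero]
    have hRHS : ∑ n ∈ Finset.range (k+1), ((k + 1 - n : ℕ) : ℂ) * (e x (n+1) + e x (-(n+1)))
        = (∑ n ∈ Finset.range k, ((k - n : ℕ) : ℂ) * (e x (n+1) + e x (-(n+1))))
          + ∑ n ∈ Finset.range (k+1), (e x (n+1) + e x (-(n+1))) := by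
      have h1 : ∑ n ∈ Finset.range (k+1), ((k + 1 - n : ℕ) : ℂ) * (e x (n+1) + e x (-(n+1)))
          = ∑ n ∈ Finset.range (k+1), (((k - n : ℕ) : ℂ) * (e x (n+1) + e x (-(n+1)))
              + (e x (n+1) + e x (-(n+1)))) := by
        apply Finset.sum_congr rfl
        intro n hn
        simp only [Finset.mem_range] at hn
        have : (k + 1 - n : ℕ) = (k - n) + 1 := by omega
        rw [this]
        push_cast
        ring
      rw [h1, Finset.sum_add_distrib, Finset.sum_range_succ
        (fun n => ((k - n : ℕ) : ℂ) * (e x (n+1) + e x (-(n+1)))) k]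
      simp
    rw [hG, map_add, conj_e, mul_add, add_mul, add_mul, ih, hcross1, hcross2, hlast, hRHS]
    simp only [mul_add, Finset.sum_add_distrib]
    push_cast
    ring

lemma sum_Icc_neg (f : ℤ → ℂ) (m : ℕ) :
    ∑ j ∈ Finset.Icc (-(m : ℤ)) m, f j
      = f 0 + ∑ n ∈ Finset.range m, (f (n + 1) + f (-(n + 1))) := by
  induction m with
  | zero => simp
  | succ m ih =>
    have h : Finset.Icc (-((m+1 : ℕ) : ℤ)) ((m+1 : ℕ) : ℤ)
        = insert ((m : ℤ) + 1) (insert (-((m : ℤ) + 1)) (Finset.Icc (-(m : ℤ)) m)) := by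
      ext j
      simp only [Finset.mem_Icc, Finset.mem_insert]
      omega
    rw [h, Finset.sum_insert, Finset.sum_insert, ih, Finset.sum_range_succ]
    · push_cast; ring
    · simp only [Finset.mem_Icc]; omega
    · simp only [Finset.mem_insert, Finset.mem_Icc]; omega

end FejerAux

namespace FejerAux

lemma fejer_eq (k : ℕ) (x : ℝ) :
    fejer k x = Complex.normSq (geomS x (k+1)) / (k+1) := by
  have hk1 : ((k : ℝ) + 1) ≠ 0 := by positivity
  have hk1c : ((k : ℂ) + 1) ≠ 0 := by exact_mod_cast hk1
  have hsum : (∑ j ∈ Finset.Icc (-(k : ℤ)) (k : ℤ),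
      ((1 - |(j : ℝ)| / (k + 1) : ℝ) : ℂ) * Complex.exp (2 * π * Complex.I * j * x))
      = ((Complex.normSq (geomS x (k+1)) / (k+1) : ℝ) : ℂ) := by
    have hmc : ((Complex.normSq (geomS x (k+1)) : ℝ) : ℂ)
        = ((k : ℂ) + 1) + ∑ n ∈ Finset.range k, ((k - n : ℕ) : ℂ) * (e x (n+1) + e x (-(n+1))) := by
      rw [← key1 x k]; exact (Complex.mul_conj _).symm
    have hden : (((k : ℝ) + 1 : ℝ) : ℂ) = (k : ℂ) + 1 := by push_cast; rfl
    have hfold : ∀ j : ℤ, Complex.exp (2 * ↑π * Complex.I * (j:ℂ) * (x:ℂ)) = e x j := fun _ => rfl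
    simp only [hfold]
    rw [sum_Icc_neg (fun j => ((1 - |(j : ℝ)| / (k + 1) : ℝ) : ℂ) * e x j) k,
      Complex.ofReal_div, hmc, hden, add_div, Finset.sum_div]
    have h0 : ((1 - |((0:ℤ) : ℝ)| / (k + 1) : ℝ) : ℂ) * e x 0 = ((k:ℂ)+1)/((k:ℂ)+1) := by
      rw [div_self hk1c, e_zero]
      norm_num
    rw [h0]
    congr 1
    apply Finset.sum_congr rfl
    intro n hn
    simp only [Finset.mem_range] at hn
    have habs1 : |(((n : ℤ) + 1 : ℤ) : ℝ)| = (n : ℝ) + 1 := by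
      push_cast
      rw [abs_of_pos (by positivity)]
    have habs2 : |((-((n : ℤ) + 1) : ℤ) : ℝ)| = (n : ℝ) + 1 := by
      push_cast
      rw [abs_neg, abs_of_pos (by positivity)]
    have hcast : ((k - n : ℕ) : ℂ) = (k : ℂ) - n := by
      push_cast [Nat.cast_sub hn.le]
      ring
    have hw : ((1 - ((n:ℝ) + 1) / ((k:ℝ) + 1) : ℝ) : ℂ) = ((k:ℂ) - n) / ((k:ℂ) + 1) := by
      rw [Complex.ofReal_sub, Complex.ofReal_div]
      push_cast
      field_simp
      ring
    rw [habs1, habs2, hcast, hw]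
    ring
  rw [fejer, hsum, Complex.ofReal_re]


lemma e_pow (x : ℝ) (m : ℕ) : e x (m : ℤ) = (e x 1) ^ m := by
  induction m with
  | zero => simpa using e_zero x
  | succ m ih =>
    have : ((m + 1 : ℕ) : ℤ) = (m : ℤ) + 1 := by push_cast; ring
    rw [this, e_add, ih, pow_succ]

lemma normSq_exp_sub_one (θ : ℝ) :
    Complex.normSq (Complex.exp (2 * π * Complex.I * θ) - 1) = 4 * Real.sin (π * θ) ^ 2 := by
  have harg : (2 * π * Complex.I * θ : ℂ) = ((2 * π * θ : ℝ) : ℂ) * Complex.I := by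
    push_cast; ring
  rw [harg, Complex.exp_mul_I]
  rw [Complex.normSq_apply]
  simp only [Complex.add_re, Complex.add_im, Complex.sub_re, Complex.sub_im, Complex.mul_re,
    Complex.mul_im, Complex.I_re, Complex.I_im, Complex.one_re, Complex.one_im,
    Complex.cos_ofReal_re, Complex.cos_ofReal_im, Complex.sin_ofReal_re, Complex.sin_ofReal_im]
  ring_nf
  nlinarith [Real.sin_sq_add_cos_sq (π * θ * 2), Real.sin_sq_add_cos_sq (π * θ),
    show Real.cos (π * θ * 2) = 2 * Real.cos (π * θ) ^ 2 - 1 by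
      rw [show π * θ * 2 = 2 * (π * θ) by ring]; exact Real.cos_two_mul _]


lemma sin_pi_x_pos {x : ℝ} (hx0 : 0 < x) (hx : x ≤ 1/2) : 2 * x ≤ Real.sin (π * x) := by
  have h := Real.mul_le_sin (x := π * x) (by positivity)
    (by nlinarith [Real.pi_pos])
  have hπ : (0:ℝ) < π := Real.pi_pos
  rw [show 2 / π * (π * x) = 2 * x by field_simp] at h
  exact h

lemma e_one_ne_one {x : ℝ} (hx0 : 0 < x) (hx : x ≤ 1/2) : e x 1 ≠ 1 := by
  intro h
  rw [e, Complex.exp_eq_one_iff] at h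
  obtain ⟨n, hn⟩ := h
  have hI : (2 * π * Complex.I : ℂ) ≠ 0 := by
    simp [Real.pi_ne_zero, Complex.I_ne_zero, Complex.ext_iff]
  have hx' : (x : ℂ) = n := by
    have h2 : (2 * π * Complex.I) * (x:ℂ) = (2 * π * Complex.I) * (n:ℂ) := by
      calc (2 * π * Complex.I) * (x:ℂ) = 2 * π * Complex.I * ((1:ℤ):ℂ) * (x:ℂ) := by
            push_cast; ring
        _ = (n:ℂ) * (2 * π * Complex.I) := hn
        _ = (2 * π * Complex.I) * (n:ℂ) := by ring
    exact mul_left_cancel₀ hI h2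
  have : x = (n : ℝ) := by exact_mod_cast hx'
  have h0 : (0:ℝ) < n := by rw [← this]; exact hx0
  have h1 : (n:ℝ) ≤ 1/2 := by rw [← this]; exact hx
  have : (0:ℤ) < n := by exact_mod_cast h0
  have : (1:ℝ) ≤ (n:ℝ) := by exact_mod_cast this
  linarith

lemma normSq_geomS {x : ℝ} (hx0 : 0 < x) (hx : x ≤ 1/2) (M : ℕ) :
    Complex.normSq (geomS x M) = Real.sin (π * M * x) ^ 2 / Real.sin (π * x) ^ 2 := by
  have hz := e_one_ne_one hx0 hx
  have hgeom : geomS x M = ((e x 1) ^ M - 1) / (e x 1 - 1) := by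
    rw [geomS]
    rw [show (∑ m ∈ Finset.range M, e x (m : ℤ)) = ∑ m ∈ Finset.range M, (e x 1) ^ m from
      Finset.sum_congr rfl fun m _ => e_pow x m]
    exact geom_sum_eq hz M
  rw [hgeom, Complex.normSq_div]
  have h1 : (e x 1) ^ M - 1 = Complex.exp (2 * π * Complex.I * (M * x : ℝ)) - 1 := by
    rw [← e_pow, e]
    push_cast
    ring_nf
  have h2 : e x 1 - 1 = Complex.exp (2 * π * Complex.I * (x : ℝ)) - 1 := by
    rw [e]; push_cast; ring_nf
  rw [h1, h2, normSq_exp_sub_one, normSq_exp_sub_one]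
  rw [show π * (M * x) = π * M * x by ring]
  have hs : Real.sin (π * x) ^ 2 ≠ 0 := by
    have h := lt_of_lt_of_le (by positivity : (0:ℝ) < 2 * x) (sin_pi_x_pos hx0 hx)
    exact pow_ne_zero 2 (ne_of_gt h)
  field_simp

lemma fejer_closed {x : ℝ} (hx0 : 0 < x) (hx : x ≤ 1/2) (k : ℕ) :
    fejer k x = Real.sin (π * (k+1) * x) ^ 2 / ((k + 1) * Real.sin (π * x) ^ 2) := by
  rw [fejer_eq, normSq_geomS hx0 hx, div_div]
  push_cast
  ring_nf

lemma fejer_nonneg (k : ℕ) (x : ℝ) : 0 ≤ fejer k x := by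
  rw [fejer_eq]
  apply div_nonneg (Complex.normSq_nonneg _) (by positivity)


lemma re_e_pow (x : ℝ) (m : ℕ) : ((e x 1) ^ m).re = Real.cos (2 * π * m * x) := by
  rw [← e_pow, e, show (2 * π * Complex.I * ((m:ℤ):ℂ) * (x:ℂ)) = ((2 * π * m * x : ℝ) : ℂ) * Complex.I by
    push_cast; ring, Complex.exp_ofReal_mul_I_re]

lemma abs_e_sub_one {x : ℝ} (hx0 : 0 < x) (hx : x ≤ 1/2) :
    ‖e x 1 - 1‖ = 2 * Real.sin (π * x) := by
  have hsin : 0 ≤ Real.sin (π * x) :=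
    le_trans (by positivity) (sin_pi_x_pos hx0 hx)
  have hns : Complex.normSq (e x 1 - 1) = 4 * Real.sin (π * x) ^ 2 := by
    rw [show e x 1 - 1 = Complex.exp (2 * π * Complex.I * (x : ℝ)) - 1 by rw [e]; push_cast; ring_nf]
    exact normSq_exp_sub_one x
  rw [Complex.norm_def, hns, show 4 * Real.sin (π * x) ^ 2 = (2 * Real.sin (π * x))^2 by ring,
    Real.sqrt_sq (by positivity)]

lemma cos_sum_bound {x : ℝ} (hx0 : 0 < x) (hx : x ≤ 1/2) (a b : ℕ) :
    |∑ m ∈ Finset.Ico a b, Real.cos (2 * π * m * x)| ≤ 1 / (2 * x) := by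
  rcases le_or_gt b a with hba | hab
  · rw [Finset.Ico_eq_empty (by omega)]
    simp
    positivity
  have hz := e_one_ne_one hx0 hx
  have hgeom : (∑ m ∈ Finset.Ico a b, (e x 1)^m) = ((e x 1)^b - (e x 1)^a)/(e x 1 - 1) :=
    geom_sum_Ico hz hab.le
  have habs1 : ∀ m : ℕ, ‖(e x 1)^m‖ = 1 := by
    intro m
    rw [← e_pow, e, Complex.norm_exp]
    rw [show (2 * π * Complex.I * ((m:ℤ):ℂ) * (x:ℂ)).re = 0 by simp [Complex.mul_re, Complex.mul_im]]
    exact Real.exp_zero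
  have hcos : (∑ m ∈ Finset.Ico a b, Real.cos (2 * π * m * x))
      = (∑ m ∈ Finset.Ico a b, (e x 1)^m).re := by
    rw [Complex.re_sum]
    exact (Finset.sum_congr rfl fun m _ => (re_e_pow x m).symm)
  have hsinpos : 0 < Real.sin (π * x) :=
    lt_of_lt_of_le (by positivity) (sin_pi_x_pos hx0 hx)
  calc |∑ m ∈ Finset.Ico a b, Real.cos (2 * π * m * x)|
      ≤ ‖∑ m ∈ Finset.Ico a b, (e x 1)^m‖ := by
        rw [hcos]; exact Complex.abs_re_le_norm _
    _ = ‖(e x 1)^b - (e x 1)^a‖ / ‖e x 1 - 1‖ := by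
        rw [hgeom, norm_div]
    _ ≤ 2 / (2 * Real.sin (π * x)) := by
        apply div_le_div₀ (by norm_num) _ (by positivity) (le_of_eq (abs_e_sub_one hx0 hx).symm)
        calc ‖(e x 1)^b - (e x 1)^a‖
            ≤ ‖(e x 1)^b‖ + ‖(e x 1)^a‖ := by
              exact (norm_sub_le _ _)
          _ = 2 := by rw [habs1, habs1]; norm_num
    _ ≤ 1 / (2 * x) := by
        rw [div_le_div_iff₀ (by positivity) (by positivity)]
        have := sin_pi_x_pos hx0 hx
        nlinarith
  
lemma sin_sq_eq (t : ℝ) : Real.sin t ^ 2 = 1/2 - Real.cos (2 * t) / 2 := by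
  have h := Real.cos_two_mul t
  nlinarith [Real.sin_sq_add_cos_sq t]

lemma block_bound {x : ℝ} (hx0 : 0 < x) (hx : x ≤ 1/2) {a : ℕ} (ha : 1 ≤ (a:ℝ) * x) :
    (1:ℝ)/8 ≤ ∑ m ∈ Finset.Ico a (2*a), Real.sin (π * m * x)^2 / m := by
  have ha1 : 1 ≤ a := by
    by_contra h
    push_neg at h
    interval_cases a
    simp at ha
    linarith
  have hsum2 : (a:ℝ)/4 ≤ ∑ m ∈ Finset.Ico a (2*a), Real.sin (π * m * x)^2 := by
    have hsplit : (∑ m ∈ Finset.Ico a (2*a), Real.sin (π * m * x)^2)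
        = (a:ℝ)/2 - (∑ m ∈ Finset.Ico a (2*a), Real.cos (2 * π * m * x))/2 := by
      have : ∀ m ∈ Finset.Ico a (2*a), Real.sin (π * m * x)^2
          = 1/2 - Real.cos (2 * π * m * x)/2 := by
        intro m _
        rw [sin_sq_eq (π * m * x), show 2 * (π * m * x) = 2 * π * m * x by ring]
      rw [Finset.sum_congr rfl this, Finset.sum_sub_distrib, Finset.sum_const, Nat.card_Ico,
        ← Finset.sum_div]
      have : 2 * a - a = a := by omega
      rw [this]
      simp
      ring
    have hcb := cos_sum_bound hx0 hx a (2*a)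
    have h2 : (∑ m ∈ Finset.Ico a (2*a), Real.cos (2 * π * m * x)) ≤ 1/(2*x) :=
      le_trans (le_abs_self _) hcb
    have h3 : 1/(2*x) ≤ (a:ℝ)/2 := by
      rw [div_le_div_iff₀ (by positivity) (by norm_num)]
      nlinarith
    rw [hsplit]
    linarith
  have hterm : ∀ m ∈ Finset.Ico a (2*a),
      Real.sin (π * m * x)^2 / (2*a : ℝ) ≤ Real.sin (π * m * x)^2 / m := by
    intro m hm
    simp only [Finset.mem_Ico] at hm
    apply div_le_div_of_nonneg_left (by positivity) _ _
    · exact_mod_cast lt_of_lt_of_le (by omega : 0 < a) hm.1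
    · exact_mod_cast hm.2.le
  calc (1:ℝ)/8 ≤ ((a:ℝ)/4) / (2*a) := by
        rw [le_div_iff₀ (by positivity)]
        have : (1:ℝ) ≤ (a:ℝ) := by exact_mod_cast ha1
        nlinarith
    _ ≤ (∑ m ∈ Finset.Ico a (2*a), Real.sin (π * m * x)^2) / (2*a) := by
        exact (div_le_div_iff_of_pos_right (by positivity)).mpr hsum2
    _ = ∑ m ∈ Finset.Ico a (2*a), Real.sin (π * m * x)^2 / (2*a : ℝ) := by
        rw [Finset.sum_div]
    _ ≤ _ := Finset.sum_le_sum hterm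


lemma blocks_bound {x : ℝ} (hx0 : 0 < x) (hx : x ≤ 1/2) {a : ℕ} (ha : 1 ≤ (a:ℝ) * x) (n : ℕ) :
    (n:ℝ)/8 ≤ ∑ m ∈ Finset.Ico a (2^n * a), Real.sin (π * m * x)^2 / m := by
  induction n with
  | zero => simp
  | succ n ih =>
    have h1 : a ≤ 2^n * a := Nat.le_mul_of_pos_left a (Nat.pow_pos (n := n) (by norm_num))
    have h2 : 2^n * a ≤ 2^(n+1) * a := by
      apply Nat.mul_le_mul_right
      exact Nat.pow_le_pow_right (by norm_num) (by omega)
    rw [← Finset.sum_Ico_consecutive _ h1 h2]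
    have ha' : 1 ≤ ((2^n * a : ℕ):ℝ) * x := by
      push_cast
      have h2n : (1:ℝ) ≤ 2^n := one_le_pow₀ (by norm_num : (1:ℝ) ≤ 2)
      nlinarith
    have hb := block_bound hx0 hx ha'
    rw [show 2 * (2^n * a) = 2^(n+1) * a by ring] at hb
    push_cast
    linarith

lemma exists_pow_between {t : ℝ} (ht : 1 ≤ t) : ∃ j : ℕ, t ≤ 2^j ∧ (2:ℝ)^j < 2*t := by
  obtain ⟨n, h1, h2⟩ := exists_nat_pow_near ht (by norm_num : (1:ℝ) < 2)
  rcases eq_or_lt_of_le h1 with he | hl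
  · refine ⟨n, le_of_eq he.symm, ?_⟩
    rw [← he]
    nlinarith [pow_pos (by norm_num : (0:ℝ) < 2) n]
  · refine ⟨n+1, h2.le, ?_⟩
    rw [pow_succ]
    nlinarith

lemma sum_Icc_id_real (K : ℕ) : ∑ m ∈ Finset.Icc 1 K, (m:ℝ) = K*(K+1)/2 := by
  induction K with
  | zero => simp
  | succ K ih =>
    rw [Finset.sum_Icc_succ_top (by omega), ih]
    push_cast
    ring

lemma sum_range_id_real (n : ℕ) : ∑ k ∈ Finset.range n, ((k:ℝ)+1) = n*(n+1)/2 := by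
  induction n with
  | zero => simp
  | succ n ih =>
    rw [Finset.sum_range_succ, ih]
    push_cast
    ring

lemma fejer_neg (k : ℕ) (x : ℝ) : fejer k (-x) = fejer k x := by
  rw [fejer_eq, fejer_eq]
  congr 1
  have : geomS (-x) (k+1) = (starRingEnd ℂ) (geomS x (k+1)) := by
    rw [geomS, geomS, map_sum]
    apply Finset.sum_congr rfl
    intro m _
    rw [conj_e, e, e]
    congr 1
    push_cast
    ring
  rw [this, Complex.normSq_conj]

lemma fejer_abs (k : ℕ) (x : ℝ) : fejer k |x| = fejer k x := by
  rcases abs_cases x with ⟨h, _⟩ | ⟨h, _⟩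
  · rw [h]
  · rw [h, fejer_neg]


lemma sum_shift (f : ℕ → ℝ) (n : ℕ) :
    ∑ m ∈ Finset.Icc 1 n, f m = ∑ k ∈ Finset.range n, f (k+1) := by
  induction n with
  | zero => simp
  | succ n ih => rw [Finset.sum_Icc_succ_top (by omega), Finset.sum_range_succ, ih]

end FejerAux

set_option maxHeartbeats 2000000 in
open FejerAux in
/-- Lemma 1 (Averaging Fejér Kernels). -/
theorem averaged_fejer_lower_bound :
    ∃ c : ℝ, 0 < c ∧ ∀ (N : ℕ) (x : ℝ), |x| ≤ 1/2 →
      c * N * Real.log (Real.exp 1 + N * |x|) / (1 + (N : ℝ) ^ 2 * x ^ 2) ≤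
        (1 / (N + 1 : ℝ)) * ∑ k ∈ Finset.range (N + 1), fejer k x := by
  classical
  refine ⟨1/100000, by norm_num, ?_⟩
  intro N x hx
  set y := |x| with hy_def
  have hy0 : (0:ℝ) ≤ y := abs_nonneg x
  have hy : y ≤ 1/2 := hx
  have hx2 : x^2 = y^2 := (sq_abs x).symm
  rw [hx2, show (∑ k ∈ Finset.range (N+1), fejer k x) = ∑ k ∈ Finset.range (N+1), fejer k y from
    Finset.sum_congr rfl fun k _ => by rw [hy_def]; exact (fejer_abs k x).symm]
  set L := Real.log (Real.exp 1 + N * y) with hL_def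
  set Q := ∑ k ∈ Finset.range (N+1), fejer k y with hQ_def
  have hQ0 : 0 ≤ Q := Finset.sum_nonneg fun k _ => fejer_nonneg k y
  have hL1 : 1 ≤ L := by
    have h0 : (0:ℝ) ≤ (N:ℝ) * y := by positivity
    have h := Real.log_le_log (Real.exp_pos 1)
      (le_add_of_nonneg_right h0 : Real.exp 1 ≤ Real.exp 1 + (N:ℝ)*y)
    rwa [Real.log_exp] at h
  rcases le_or_gt ((N:ℝ) * y) (1/8) with hA | hBC
  · -- Case A : N y ≤ 1/8
    have hLle : L ≤ 2 := by
      have h1 : Real.exp 1 + (N:ℝ)*y ≤ 3 := by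
        have := Real.exp_one_lt_d9
        linarith
      calc L ≤ (Real.exp 1 + (N:ℝ)*y) - 1 := Real.log_le_sub_one_of_pos (by positivity)
        _ ≤ 2 := by linarith
    have hfk : ∀ k ∈ Finset.range (N+1), ((k:ℝ)+1)/4 ≤ fejer k y := by
      intro k hk
      simp only [Finset.mem_range] at hk
      have hcos : ∀ m ∈ Finset.range (k+1), (1:ℝ)/2 ≤ (e y (m:ℤ)).re := by
        intro m hm
        simp only [Finset.mem_range] at hm
        rw [e_pow, re_e_pow]
        have hmN : (m:ℝ) ≤ N := by exact_mod_cast (by omega : m ≤ N)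
        have hmy : (m:ℝ)*y ≤ 1/8 := le_trans (by nlinarith) hA
        have harg : 2*π*m*y ≤ π/4 := by nlinarith [Real.pi_pos]
        have h0 : 0 ≤ 2*π*(m:ℝ)*y := by positivity
        have hc := Real.cos_le_cos_of_nonneg_of_le_pi h0
          (by nlinarith [Real.pi_pos] : (π/4:ℝ) ≤ π) harg
        rw [Real.cos_pi_div_four] at hc
        nlinarith [Real.sq_sqrt (by norm_num : (0:ℝ) ≤ 2), Real.sqrt_nonneg 2]
      have hre : ((k:ℝ)+1)/2 ≤ (geomS y (k+1)).re := by
        rw [geomS, Complex.re_sum]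
        calc ((k:ℝ)+1)/2 = ∑ _m ∈ Finset.range (k+1), (1:ℝ)/2 := by
              rw [Finset.sum_const, Finset.card_range]
              push_cast
              ring
          _ ≤ _ := Finset.sum_le_sum hcos
      rw [fejer_eq, le_div_iff₀ (by positivity : (0:ℝ) < (k:ℝ)+1), Complex.normSq_apply]
      nlinarith [sq_nonneg ((geomS y (k+1)).im), hre, sq_nonneg ((geomS y (k+1)).re - ((k:ℝ)+1)/2)]
    have hQge : ((N:ℝ)+1)*((N:ℝ)+2)/8 ≤ Q := by
      calc ((N:ℝ)+1)*((N:ℝ)+2)/8 = ∑ k ∈ Finset.range (N+1), (((k:ℝ)+1)/4) := by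
            rw [← Finset.sum_div, sum_range_id_real (N+1)]
            push_cast
            ring
        _ ≤ Q := Finset.sum_le_sum hfk
    have hden : (1:ℝ) ≤ 1 + (N:ℝ)^2*y^2 := by nlinarith [sq_nonneg ((N:ℝ)*y)]
    have hnum0 : 0 ≤ (1/100000:ℝ)*N*L := by
      have : (0:ℝ) ≤ L := by linarith
      positivity
    calc (1/100000:ℝ)*N*L/(1+(N:ℝ)^2*y^2) ≤ (1/100000:ℝ)*N*L := div_le_self hnum0 hden
      _ ≤ (1/100000:ℝ)*N*2 := by
          have hN0 : (0:ℝ) ≤ (N:ℝ) := Nat.cast_nonneg N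
          nlinarith
      _ ≤ ((N:ℝ)+2)/8 := by
          have hN0 : (0:ℝ) ≤ (N:ℝ) := Nat.cast_nonneg N
          nlinarith
      _ = (1/((N:ℝ)+1))*(((N:ℝ)+1)*((N:ℝ)+2)/8) := by
          field_simp
      _ ≤ (1/((N:ℝ)+1))*Q := by
          apply mul_le_mul_of_nonneg_left hQge (by positivity)
  · -- Cases B and C : N y > 1/8
    have hy0' : (0:ℝ) < y := by
      rcases eq_or_lt_of_le hy0 with h | h
      · exfalso
        rw [← h] at hBC
        simp at hBC
        linarith
      · exact h
    have hN1 : 1 ≤ N := by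
      by_contra h
      push_neg at h
      interval_cases N
      simp at hBC
      linarith
    have hN1R : (1:ℝ) ≤ (N:ℝ) := by exact_mod_cast hN1
    have hsiny : 0 < Real.sin (π*y) := lt_of_lt_of_le (by positivity) (sin_pi_x_pos hy0' hy)
    have hsinle : Real.sin (π*y)^2 ≤ π^2*y^2 := by
      have h1 : Real.sin (π*y) ≤ π*y := le_of_lt (Real.sin_lt (by positivity))
      calc Real.sin (π*y)^2 ≤ (π*y)^2 := pow_le_pow_left₀ hsiny.le h1 2
        _ = π^2*y^2 := by ring
    set S := ∑ m ∈ Finset.Icc 1 (N+1), Real.sin (π*m*y)^2/(m:ℝ) with hS_def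
    have hS0 : 0 ≤ S := Finset.sum_nonneg fun m _ => by positivity
    have hks : Real.sin (π*y)^2 ≠ 0 := by positivity
    have hQS : Q * Real.sin (π*y)^2 = S := by
      rw [hQ_def, Finset.sum_mul, hS_def,
        sum_shift (fun m => Real.sin (π*m*y)^2/(m:ℝ)) (N+1)]
      apply Finset.sum_congr rfl
      intro k _
      rw [fejer_closed hy0' hy]
      push_cast
      rw [← div_div, div_mul_cancel₀ _ hks]
    have hQeq : Q = S / Real.sin (π*y)^2 := by
      rw [← hQS, mul_div_cancel_right₀ _ hks]
    have hQge : S/(π^2*y^2) ≤ Q := by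
      rw [hQeq]
      exact div_le_div_of_nonneg_left hS0 (by positivity) hsinle
    have hred : (1/100000:ℝ)*N*L*(((N:ℝ)+1)*(π^2*y^2)) ≤ S*(1+(N:ℝ)^2*y^2) →
        (1/100000:ℝ)*N*L/(1+(N:ℝ)^2*y^2) ≤ (1/((N:ℝ)+1))*Q := by
      intro h
      calc (1/100000:ℝ)*N*L/(1+(N:ℝ)^2*y^2) ≤ S/(((N:ℝ)+1)*(π^2*y^2)) :=
            (div_le_div_iff₀ (by positivity) (by positivity)).mpr h
        _ = (1/((N:ℝ)+1))*(S/(π^2*y^2)) := by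
            rw [mul_comm ((N:ℝ)+1) (π^2*y^2), ← div_div, div_eq_mul_inv (S/(π^2*y^2)),
              mul_comm (S/(π^2*y^2)) (((N:ℝ)+1))⁻¹, one_div]
        _ ≤ (1/((N:ℝ)+1))*Q := mul_le_mul_of_nonneg_left hQge (by positivity)
    rcases le_or_gt ((N:ℝ)*y) 64 with hB | hC
    · -- Case B : 1/8 < N y ≤ 64
      apply hred
      have hL66 : L ≤ 66 := by
        have := Real.exp_one_lt_d9
        calc L ≤ (Real.exp 1 + (N:ℝ)*y) - 1 := Real.log_le_sub_one_of_pos (by positivity)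
          _ ≤ 66 := by linarith
      -- lower bound S ≥ 1/32
      set M0 := ⌊1/(2*y)⌋₊ with hM0_def
      set K := min (N+1) M0 with hK_def
      have hM0l : (M0:ℝ) ≤ 1/(2*y) := Nat.floor_le (by positivity)
      have hM01 : 1 ≤ M0 := by
        apply Nat.le_floor
        rw [le_div_iff₀ (by positivity)]
        push_cast
        linarith
      have hM0y : 1/4 ≤ (M0:ℝ)*y := by
        have h2 : 1/(2*y) < (M0:ℝ) + 1 := Nat.lt_floor_add_one _
        have hM01R : (1:ℝ) ≤ (M0:ℝ) := by exact_mod_cast hM01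
        rw [div_lt_iff₀ (by positivity)] at h2
        nlinarith
      have hKy : 1/8 ≤ (K:ℝ)*y := by
        rcases min_choice (N+1) M0 with hmin | hmin <;> rw [hK_def, hmin]
        · push_cast
          nlinarith
        · linarith
      have hterm : ∀ m ∈ Finset.Icc 1 K, 4*(m:ℝ)*y^2 ≤ Real.sin (π*m*y)^2/(m:ℝ) := by
        intro m hm
        simp only [Finset.mem_Icc] at hm
        have hm1 : (1:ℝ) ≤ (m:ℝ) := by exact_mod_cast hm.1
        have hmM0 : (m:ℝ) ≤ (M0:ℝ) := by
          have : m ≤ M0 := le_trans hm.2 (min_le_right _ _)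
          exact_mod_cast this
        have hmy2 : (m:ℝ)*y ≤ 1/2 := by
          have : (m:ℝ) ≤ 1/(2*y) := le_trans hmM0 hM0l
          rw [le_div_iff₀ (by positivity)] at this
          linarith
        have hs := sin_pi_x_pos (by positivity : (0:ℝ) < (m:ℝ)*y) hmy2
        rw [show π*((m:ℝ)*y) = π*(m:ℝ)*y by ring] at hs
        rw [le_div_iff₀ (by positivity : (0:ℝ) < (m:ℝ))]
        have h2 : (2*((m:ℝ)*y))^2 ≤ Real.sin (π*(m:ℝ)*y)^2 := pow_le_pow_left₀ (by positivity) hs 2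
        nlinarith [h2]
      have hS32 : 1/32 ≤ S := by
        have hsub : Finset.Icc 1 K ⊆ Finset.Icc 1 (N+1) :=
          Finset.Icc_subset_Icc le_rfl (min_le_left _ _)
        have h1 : ∑ m ∈ Finset.Icc 1 K, 4*(m:ℝ)*y^2 ≤ ∑ m ∈ Finset.Icc 1 K,
            Real.sin (π*m*y)^2/(m:ℝ) := Finset.sum_le_sum hterm
        have h2 : ∑ m ∈ Finset.Icc 1 K, Real.sin (π*m*y)^2/(m:ℝ) ≤ S := by
          rw [hS_def]
          exact Finset.sum_le_sum_of_subset_of_nonneg hsub (fun m _ _ => by positivity)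
        have h3 : ∑ m ∈ Finset.Icc 1 K, 4*(m:ℝ)*y^2 = 2*y^2*((K:ℝ)*((K:ℝ)+1)) := by
          have : ∑ m ∈ Finset.Icc 1 K, 4*(m:ℝ)*y^2 = 4*y^2 * ∑ m ∈ Finset.Icc 1 K, (m:ℝ) := by
            rw [Finset.mul_sum]
            exact Finset.sum_congr rfl fun m _ => by ring
          rw [this, sum_Icc_id_real]
          ring
        have hK0 : (0:ℝ) ≤ (K:ℝ) := Nat.cast_nonneg K
        nlinarith [sq_nonneg ((K:ℝ)*y)]
      -- final polynomial inequality
      have hpi2 : π^2 ≤ 16 := by nlinarith [Real.pi_le_four, Real.pi_pos]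
      have hL0 : (0:ℝ) ≤ L := by linarith
      have hN2 : ((N:ℝ)+1) ≤ 2*(N:ℝ) := by linarith
      calc (1/100000:ℝ)*N*L*(((N:ℝ)+1)*(π^2*y^2))
          ≤ (1/100000:ℝ)*N*66*((2*(N:ℝ))*(16*y^2)) := by
            gcongr <;> first | positivity | linarith
        _ ≤ (1/32)*(1+(N:ℝ)^2*y^2) := by nlinarith [sq_nonneg ((N:ℝ)*y)]
        _ ≤ S*(1+(N:ℝ)^2*y^2) := by
            apply mul_le_mul_of_nonneg_right hS32 (by positivity)
    · -- Case C : N y > 64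
      apply hred
      have hyinv : (1:ℝ) ≤ 1/y := by
        rw [le_div_iff₀ hy0']
        linarith
      obtain ⟨j0, hj1, hj2⟩ := exists_pow_between hyinv
      set a : ℕ := 2^j0 with ha_def
      have haR : ((a:ℕ):ℝ) = 2^j0 := by rw [ha_def]; push_cast; ring
      have ha1 : 1 ≤ a := Nat.one_le_two_pow
      have hapos : (0:ℝ) < (a:ℝ) := by positivity
      have hay : 1 ≤ (a:ℝ)*y := by
        rw [haR]
        calc (1:ℝ) = (1/y)*y := by field_simp
          _ ≤ 2^j0 * y := mul_le_mul_of_nonneg_right hj1 hy0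
      have ha2y : (a:ℝ) < 2/y := by
        rw [haR]
        have h21 : 2*(1/y) = 2/y := by ring
        linarith
      have ht' : (32:ℝ) < ((N:ℝ)+1)/(a:ℝ) := by
        rw [lt_div_iff₀ hapos]
        have h1 : 2/y < ((N:ℝ)+1)/32 := by
          rw [div_lt_div_iff₀ hy0' (by norm_num)]
          nlinarith
        nlinarith
      obtain ⟨n, hn1, hn2⟩ := exists_nat_pow_near
        (le_trans (by norm_num : (1:ℝ) ≤ 32) ht'.le) (by norm_num : (1:ℝ) < 2)
      have hnaR : ((2^n * a : ℕ):ℝ) ≤ (N:ℝ)+1 := by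
        push_cast
        rw [← le_div_iff₀ hapos] at *
        exact hn1
      have hnaN : 2^n * a ≤ N+1 := by exact_mod_cast hnaR
      have hn5 : 5 ≤ n := by
        by_contra h
        push_neg at h
        have : ((N:ℝ)+1)/(a:ℝ) < 32 := by
          calc ((N:ℝ)+1)/(a:ℝ) < 2^(n+1) := hn2
            _ ≤ 2^5 := by
              apply pow_le_pow_right₀ (by norm_num : (1:ℝ) ≤ 2)
              omega
            _ = 32 := by norm_num
        linarith
      have hn5R : (5:ℝ) ≤ (n:ℝ) := by exact_mod_cast hn5
      have hblocks := blocks_bound hy0' hy hay n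
      have hsub : Finset.Ico a (2^n * a) ⊆ Finset.Icc 1 (N+1) := by
        intro m hm
        simp only [Finset.mem_Ico] at hm
        simp only [Finset.mem_Icc]
        constructor
        · omega
        · omega
      have hSn : (n:ℝ)/8 ≤ S := by
        refine le_trans hblocks ?_
        rw [hS_def]
        exact Finset.sum_le_sum_of_subset_of_nonneg hsub (fun m _ _ => by positivity)
      have hLn : L ≤ 2*(n:ℝ) := by
        have hNy2 : (N:ℝ)*y < 2^(n+2) := by
          rw [div_lt_iff₀ hapos] at hn2
          have h1 : (N:ℝ)+1 < 2^(n+1)*(2/y) := by nlinarith [pow_pos (by norm_num : (0:ℝ) < 2) (n+1)]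
          have h2 : ((N:ℝ)+1)*y < 2^(n+2) := by
            rw [show ((2:ℝ))^(n+2) = 2^(n+1)*2 by ring]
            calc ((N:ℝ)+1)*y < (2^(n+1)*(2/y))*y := by nlinarith
              _ = 2^(n+1)*2 := by field_simp
          nlinarith
        have hexp4 : Real.exp 1 ≤ 4 := by
          have := Real.exp_one_lt_d9
          linarith
        have hle : Real.exp 1 + (N:ℝ)*y ≤ 2^(n+3) := by
          have h4 : (4:ℝ) ≤ 2^(n+2) := by
            calc (4:ℝ) = 2^2 := by norm_num
              _ ≤ 2^(n+2) := by
                apply pow_le_pow_right₀ (by norm_num : (1:ℝ) ≤ 2)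
                omega
          have : (2:ℝ)^(n+3) = 2^(n+2) + 2^(n+2) := by ring
          linarith
        calc L ≤ Real.log (2^(n+3)) := Real.log_le_log (by positivity) hle
          _ = ((n:ℝ)+3)*Real.log 2 := by
              rw [Real.log_pow]
              push_cast
              ring
          _ ≤ 2*(n:ℝ) := by
              have hlog2 := Real.log_two_lt_d9
              have hlog2p := Real.log_pos (by norm_num : (1:ℝ) < 2)
              nlinarith
      have hpi2 : π^2 ≤ 16 := by nlinarith [Real.pi_le_four, Real.pi_pos]
      have hL0 : (0:ℝ) ≤ L := by linarith
      have hLS : L/16 ≤ S := by linarith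
      calc (1/100000:ℝ)*N*L*(((N:ℝ)+1)*(π^2*y^2))
          ≤ (1/100000:ℝ)*N*L*((2*(N:ℝ))*(16*y^2)) := by
            gcongr <;> first | positivity | linarith
        _ ≤ (L/16)*(1+(N:ℝ)^2*y^2) := by
            nlinarith [mul_nonneg hL0 (sq_nonneg ((N:ℝ)*y)), sq_nonneg ((N:ℝ)*y)]
        _ ≤ S*(1+(N:ℝ)^2*y^2) := by
            apply mul_le_mul_of_nonneg_right hLS (by positivity)
end
end

section
/- (Proposition 2) For every dimension d ≥ 1 there exists a constant c > 0 (depending only on d) such that for every t ∈ (0, 1], every N ≥ 1, and all points x_1, …, x_N ∈ 𝕋^d, one has ‖ N − Σ_{n=1}^N K_t(· − x_n) ‖²_{L^∞(𝕋^d)} ≥ c · Σ_{k ∈ ℤ^d, k ≠ 0, ‖k‖ ≤ t^{−1/2}} |Σ_{n=1}^N e^{2πi⟨k, x_n⟩}|². -/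
open scoped Real BigOperators
open MeasureTheory

noncomputable section

/-- The Euclidean norm of an integer vector `k ∈ ℤ^d`. -/
def znorm {d : ℕ} (k : Fin d → ℤ) : ℝ := Real.sqrt (∑ m, ((k m : ℝ)) ^ 2)

/-- The heat kernel `K_t(x) = Σ_{k ∈ ℤ^d} e^{−4π²‖k‖²t} e^{2πi⟨k,x⟩}` on `𝕋^d`
(a real number, realized as the real part of the defining series). -/
def heatKernel (d : ℕ) (t : ℝ) (x : Torus d) : ℝ :=
  (∑' k : Fin d → ℤ, (Real.exp (-4 * π ^ 2 * znorm k ^ 2 * t) : ℂ) * torusChar k x).re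

namespace Prop2

open Complex

instance : IsProbabilityMeasure (volume : Measure (AddCircle (1:ℝ))) :=
  ⟨by simp [AddCircle.measure_univ]⟩

instance (d : ℕ) : IsProbabilityMeasure (volume : Measure (Torus d)) :=
  MeasureTheory.Measure.pi.instIsProbabilityMeasure _

variable {d : ℕ}

lemma znorm_nonneg (k : Fin d → ℤ) : 0 ≤ znorm k := Real.sqrt_nonneg _

lemma znorm_sq (k : Fin d → ℤ) : znorm k ^ 2 = ∑ m, ((k m : ℝ)) ^ 2 :=
  Real.sq_sqrt (Finset.sum_nonneg fun _ _ => sq_nonneg _)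

lemma znorm_neg (k : Fin d → ℤ) : znorm (-k) = znorm k := by simp [znorm]

lemma norm_torusChar (k : Fin d → ℤ) (x : Torus d) : ‖torusChar k x‖ = 1 := by
  rw [torusChar, norm_prod]
  simp only [fourier_apply]
  simp [Circle.norm_coe]

lemma torusChar_zero (x : Torus d) : torusChar 0 x = 1 := by
  simp [torusChar, fourier_zero]

lemma torusChar_continuous (k : Fin d → ℤ) : Continuous (torusChar k) := by
  unfold torusChar
  exact continuous_finset_prod _ fun m _ =>
    (fourier (k m)).continuous.comp (continuous_apply m)

lemma fourier_pt_sub {T : ℝ} (n : ℤ) (a b : AddCircle T) :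
    fourier n (a - b) = fourier n a * (starRingEnd ℂ) (fourier n b) := by
  rw [sub_eq_add_neg, fourier_apply, zsmul_add, AddCircle.toCircle_add, Circle.coe_mul,
    ← fourier_apply, smul_neg, fourier_neg']

lemma torusChar_sub (k : Fin d → ℤ) (y x : Torus d) :
    torusChar k (y - x) = torusChar k y * (starRingEnd ℂ) (torusChar k x) := by
  unfold torusChar
  rw [map_prod, ← Finset.prod_mul_distrib]
  exact Finset.prod_congr rfl fun m _ => fourier_pt_sub (k m) (y m) (x m)

lemma torusChar_neg (k : Fin d → ℤ) (x : Torus d) :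
    torusChar (-k) x = (starRingEnd ℂ) (torusChar k x) := by
  unfold torusChar
  rw [map_prod]
  exact Finset.prod_congr rfl fun m _ => by
    have : (-k) m = -(k m) := rfl
    rw [this, fourier_neg]

lemma summable_exp_neg_int_sq {c : ℝ} (hc : 0 < c) :
    Summable fun n : ℤ => Real.exp (-(c * (n : ℝ) ^ 2)) := by
  have hgeom : Summable fun n : ℕ => Real.exp (-c) ^ n :=
    summable_geometric_of_lt_one (Real.exp_pos _).le
      (by rw [Real.exp_lt_one_iff]; linarith)
  have key : ∀ n : ℕ, Real.exp (-(c * (n : ℝ) ^ 2)) ≤ Real.exp (-c) ^ n := by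
    intro n
    rw [← Real.exp_nat_mul]
    apply Real.exp_le_exp.mpr
    have : (1 : ℝ) * (n:ℝ) ≤ (n:ℝ) * (n:ℝ) ∨ n = 0 := by
      rcases Nat.eq_zero_or_pos n with h | h
      · exact Or.inr h
      · exact Or.inl (by
          have : (1:ℝ) ≤ (n:ℝ) := by exact_mod_cast h
          nlinarith)
    rcases this with h | h
    · nlinarith
    · simp [h]
  apply Summable.of_nat_of_neg
  · exact Summable.of_nonneg_of_le (fun n => (Real.exp_pos _).le) key hgeom
  · refine Summable.of_nonneg_of_le (fun n => (Real.exp_pos _).le) (fun n => ?_) hgeom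
    have : ((-(n:ℤ) : ℤ) : ℝ) ^ 2 = ((n:ℕ) : ℝ) ^ 2 := by push_cast; ring
    rw [this]
    exact key n

lemma summable_prod_pi {g : ℤ → ℝ} (hg : Summable g) (h0 : ∀ n, 0 ≤ g n) (d : ℕ) :
    Summable fun k : Fin d → ℤ => ∏ m, g (k m) := by
  induction d with
  | zero => exact Summable.of_finite
  | succ n ih =>
      have hf' : (0 : ℤ → ℝ) ≤ g := Pi.le_def.mpr h0
      have hg' : (0 : (Fin n → ℤ) → ℝ) ≤ fun k => ∏ m, g (k m) :=
        Pi.le_def.mpr fun k => Finset.prod_nonneg fun m _ => h0 _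
      have h2 : Summable fun p : ℤ × (Fin n → ℤ) => g p.1 * ∏ m, g (p.2 m) :=
        Summable.mul_of_nonneg (f := g) (g := fun k : Fin n → ℤ => ∏ m, g (k m)) hg ih hf' hg'
      rw [← (Fin.consEquiv fun _ : Fin (n+1) => ℤ).summable_iff]
      refine h2.congr fun p => ?_
      show g p.1 * ∏ m, g (p.2 m) = ∏ m, g ((Fin.consEquiv fun _ : Fin (n+1) => ℤ) p m)
      have he : (Fin.consEquiv fun _ : Fin (n+1) => ℤ) p = Fin.cons p.1 p.2 := rfl
      rw [he, Fin.prod_univ_succ, Fin.cons_zero]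
      simp [Fin.cons_succ]

lemma summable_coef {t : ℝ} (ht : 0 < t) (d : ℕ) :
    Summable fun k : Fin d → ℤ => Real.exp (-4 * π ^ 2 * znorm k ^ 2 * t) := by
  have hc : 0 < 4 * π ^ 2 * t := by positivity
  have h1 : ∀ k : Fin d → ℤ,
      Real.exp (-4 * π ^ 2 * znorm k ^ 2 * t)
        = ∏ m, Real.exp (-(4 * π ^ 2 * t * ((k m : ℝ)) ^ 2)) := by
    intro k
    rw [← Real.exp_sum]
    congr 1
    rw [znorm_sq, Finset.mul_sum, Finset.sum_mul]
    exact Finset.sum_congr rfl fun m _ => by ring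
  simp_rw [h1]
  exact summable_prod_pi
    (g := fun nn : ℤ => Real.exp (-(4 * π ^ 2 * t * (nn : ℝ) ^ 2)))
    (by
      have := summable_exp_neg_int_sq (c := 4 * π ^ 2 * t) hc
      exact this.congr fun nn => by ring_nf)
    (fun nn => (Real.exp_pos _).le) d

lemma integral_fourier_volume (n : ℤ) :
    (∫ u : AddCircle (1:ℝ), fourier n u) = if n = 0 then 1 else 0 := by
  split_ifs with h
  · subst h
    have : (fun u : AddCircle (1:ℝ) => (fourier 0 u : ℂ)) = fun _ => (1:ℂ) :=
      funext fun u => fourier_zero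
    rw [this, integral_const]
    simp
  · exact integral_eq_zero_of_add_right_eq_neg (fourier_add_half_inv_index h one_pos)

lemma integral_fourier_mul_volume (a b : ℤ) :
    (∫ u : AddCircle (1:ℝ), (starRingEnd ℂ) (fourier a u) * fourier b u)
      = if b = a then 1 else 0 := by
  have h : ∀ u : AddCircle (1:ℝ),
      (starRingEnd ℂ) (fourier a u) * fourier b u = fourier (-a + b) u := by
    intro u
    rw [fourier_add, fourier_neg]
  simp_rw [h]
  rw [integral_fourier_volume]
  congr 1
  simp [neg_add_eq_zero, eq_comm]

lemma integral_torusChar_mul (l k : Fin d → ℤ) :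
    (∫ y : Torus d, (starRingEnd ℂ) (torusChar l y) * torusChar k y)
      = if k = l then 1 else 0 := by
  have h : ∀ y : Torus d, (starRingEnd ℂ) (torusChar l y) * torusChar k y
      = ∏ m, ((starRingEnd ℂ) (fourier (l m) (y m)) * fourier (k m) (y m)) := by
    intro y
    rw [torusChar, torusChar, map_prod, Finset.prod_mul_distrib]
  simp_rw [h]
  rw [MeasureTheory.volume_pi, MeasureTheory.integral_fintype_prod_eq_prod
    (f := fun m u => (starRingEnd ℂ) (fourier (l m) u) * fourier (k m) u)]
  simp_rw [integral_fourier_mul_volume]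
  by_cases hkl : k = l
  · subst hkl
    rw [if_pos rfl]
    exact Finset.prod_eq_one fun m _ => if_pos rfl
  · rw [if_neg hkl]
    obtain ⟨m, hm⟩ := Function.ne_iff.mp hkl
    exact Finset.prod_eq_zero (Finset.mem_univ m) (by simp [hm])

lemma integral_torusChar (k : Fin d → ℤ) :
    (∫ y : Torus d, torusChar k y) = if k = 0 then 1 else 0 := by
  have h := integral_torusChar_mul (l := (0 : Fin d → ℤ)) (k := k)
  simpa only [torusChar_zero, map_one, one_mul] using h

lemma integrable_of_continuous {h : Torus d → ℂ} (hh : Continuous h) :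
    Integrable h (volume : Measure (Torus d)) := by
  have hcs : HasCompactSupport h :=
    IsCompact.of_isClosed_subset isCompact_univ (isClosed_tsupport h) (Set.subset_univ _)
  exact hh.integrable_of_hasCompactSupport hcs

lemma finite_freq (R : ℝ) : Set.Finite {k : Fin d → ℤ | k ≠ 0 ∧ znorm k ≤ R} := by
  have hsub : {k : Fin d → ℤ | k ≠ 0 ∧ znorm k ≤ R} ⊆
      Set.pi Set.univ (fun _ : Fin d => Set.Icc (-⌈R⌉) ⌈R⌉) := by
    rintro k ⟨-, hk⟩ m -
    have h1 : |(k m : ℝ)| ≤ znorm k := by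
      rw [← Real.sqrt_sq_eq_abs]
      exact Real.sqrt_le_sqrt (Finset.single_le_sum (f := fun m => ((k m : ℝ)) ^ 2)
        (fun m _ => sq_nonneg _) (Finset.mem_univ m))
    have h2 : |(k m : ℝ)| ≤ R := h1.trans hk
    obtain ⟨h3, h4⟩ := abs_le.mp h2
    constructor
    · have : (-(⌈R⌉ : ℝ)) ≤ (k m : ℝ) := le_trans (neg_le_neg (Int.le_ceil R)) h3
      exact_mod_cast this
    · have : (k m : ℝ) ≤ (⌈R⌉ : ℝ) := h4.trans (Int.le_ceil R)
      exact_mod_cast this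
  exact (Set.Finite.pi fun _ => Set.finite_Icc _ _).subset hsub

lemma summable_term {t : ℝ} (ht : 0 < t) (z : Torus d) :
    Summable fun k : Fin d → ℤ =>
      (Real.exp (-4 * π ^ 2 * znorm k ^ 2 * t) : ℂ) * torusChar k z := by
  apply Summable.of_norm_bounded (summable_coef ht d)
  intro k
  rw [norm_mul, norm_torusChar, mul_one, Complex.norm_real, Real.norm_eq_abs,
    abs_of_pos (Real.exp_pos _)]

lemma heatKernel_coe {t : ℝ} (ht : 0 < t) (z : Torus d) :
    ((heatKernel d t z : ℝ) : ℂ)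
      = ∑' k : Fin d → ℤ, (Real.exp (-4 * π ^ 2 * znorm k ^ 2 * t) : ℂ) * torusChar k z := by
  unfold heatKernel
  apply Complex.conj_eq_iff_re.mp
  rw [starRingEnd_apply, tsum_star]
  have h1 : ∀ k : Fin d → ℤ,
      star ((Real.exp (-4 * π ^ 2 * znorm k ^ 2 * t) : ℂ) * torusChar k z)
        = (Real.exp (-4 * π ^ 2 * znorm (-k) ^ 2 * t) : ℂ) * torusChar (-k) z := by
    intro k
    rw [← starRingEnd_apply, map_mul, Complex.conj_ofReal, ← torusChar_neg, znorm_neg]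
  simp_rw [h1]
  exact (Equiv.neg (Fin d → ℤ)).tsum_eq
    (fun k => (Real.exp (-4 * π ^ 2 * znorm k ^ 2 * t) : ℂ) * torusChar k z)

lemma sum_heatKernel_coe {t : ℝ} (ht : 0 < t) {N : ℕ} (x : Fin N → Torus d) (y : Torus d) :
    ((∑ n, heatKernel d t (y - x n) : ℝ) : ℂ)
      = ∑' k : Fin d → ℤ, (Real.exp (-4 * π ^ 2 * znorm k ^ 2 * t) : ℂ) * torusChar k y
          * (starRingEnd ℂ) (∑ n, torusChar k (x n)) := by
  rw [Complex.ofReal_sum]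
  have h1 : ∀ n, ((heatKernel d t (y - x n) : ℝ) : ℂ)
      = ∑' k : Fin d → ℤ, (Real.exp (-4 * π ^ 2 * znorm k ^ 2 * t) : ℂ) * torusChar k (y - x n) :=
    fun n => heatKernel_coe ht _
  simp_rw [h1]
  rw [← Summable.tsum_finsetSum (fun n _ => summable_term ht (y - x n))]
  refine tsum_congr fun k => ?_
  rw [map_sum, Finset.mul_sum]
  exact Finset.sum_congr rfl fun n _ => by rw [torusChar_sub]; ring

lemma norm_sum_char_le {N : ℕ} (x : Fin N → Torus d) (k : Fin d → ℤ) :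
    ‖∑ n, torusChar k (x n)‖ ≤ (N : ℝ) := by
  calc ‖∑ n, torusChar k (x n)‖ ≤ ∑ n, ‖torusChar k (x n)‖ := norm_sum_le _ _
  _ = (N : ℝ) := by
    rw [Finset.sum_congr rfl (fun n _ => norm_torusChar k (x n))]
    simp

lemma integral_conj_char_mul_G {t : ℝ} (ht : 0 < t) {N : ℕ} (x : Fin N → Torus d)
    (l : Fin d → ℤ) :
    (∫ y : Torus d, (starRingEnd ℂ) (torusChar l y) *
        ∑' k : Fin d → ℤ, (Real.exp (-4 * π ^ 2 * znorm k ^ 2 * t) : ℂ) * torusChar k y *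
          (starRingEnd ℂ) (∑ n, torusChar k (x n)))
      = (Real.exp (-4 * π ^ 2 * znorm l ^ 2 * t) : ℂ) *
          (starRingEnd ℂ) (∑ n, torusChar l (x n)) := by
  have h0 : ∀ y : Torus d, (starRingEnd ℂ) (torusChar l y) *
      ∑' k : Fin d → ℤ, (Real.exp (-4 * π ^ 2 * znorm k ^ 2 * t) : ℂ) * torusChar k y *
        (starRingEnd ℂ) (∑ n, torusChar k (x n))
      = ∑' k : Fin d → ℤ, ((Real.exp (-4 * π ^ 2 * znorm k ^ 2 * t) : ℂ) *
          (starRingEnd ℂ) (∑ n, torusChar k (x n))) *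
          ((starRingEnd ℂ) (torusChar l y) * torusChar k y) := by
    intro y
    rw [← tsum_mul_left]
    exact tsum_congr fun k => by ring
  simp_rw [h0]
  have hInt : ∀ k : Fin d → ℤ, Integrable (fun y : Torus d =>
      ((Real.exp (-4 * π ^ 2 * znorm k ^ 2 * t) : ℂ) *
        (starRingEnd ℂ) (∑ n, torusChar k (x n))) *
        ((starRingEnd ℂ) (torusChar l y) * torusChar k y)) volume := by
    intro k
    apply integrable_of_continuous
    exact continuous_const.mul
      (((continuous_star.comp (torusChar_continuous l))).mul (torusChar_continuous k))
  have hnorm : ∀ k : Fin d → ℤ, ∀ y : Torus d,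
      ‖((Real.exp (-4 * π ^ 2 * znorm k ^ 2 * t) : ℂ) *
        (starRingEnd ℂ) (∑ n, torusChar k (x n))) *
        ((starRingEnd ℂ) (torusChar l y) * torusChar k y)‖
      = Real.exp (-4 * π ^ 2 * znorm k ^ 2 * t) * ‖∑ n, torusChar k (x n)‖ := by
    intro k y
    rw [norm_mul, norm_mul, norm_mul, RCLike.norm_conj, RCLike.norm_conj, norm_torusChar,
      norm_torusChar, Complex.norm_real, Real.norm_eq_abs, abs_of_pos (Real.exp_pos _)]
    ring
  have hSum : Summable fun k : Fin d → ℤ => ∫ y : Torus d,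
      ‖((Real.exp (-4 * π ^ 2 * znorm k ^ 2 * t) : ℂ) *
        (starRingEnd ℂ) (∑ n, torusChar k (x n))) *
        ((starRingEnd ℂ) (torusChar l y) * torusChar k y)‖ := by
    apply Summable.of_nonneg_of_le
      (fun k => integral_nonneg fun y => norm_nonneg _) ?_ ((summable_coef ht d).mul_right (N : ℝ))
    intro k
    rw [integral_congr_ae (Filter.Eventually.of_forall (hnorm k)), integral_const]
    simp only [measure_univ, ENNReal.toReal_one, one_smul, probReal_univ]
    exact mul_le_mul_of_nonneg_left (norm_sum_char_le x k) (Real.exp_pos _).le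
  rw [← MeasureTheory.integral_tsum_of_summable_integral_norm hInt hSum]
  have h2 : ∀ k : Fin d → ℤ, (∫ y : Torus d,
      ((Real.exp (-4 * π ^ 2 * znorm k ^ 2 * t) : ℂ) *
        (starRingEnd ℂ) (∑ n, torusChar k (x n))) *
        ((starRingEnd ℂ) (torusChar l y) * torusChar k y))
      = ((Real.exp (-4 * π ^ 2 * znorm k ^ 2 * t) : ℂ) *
        (starRingEnd ℂ) (∑ n, torusChar k (x n))) * (if k = l then 1 else 0) := by
    intro k
    rw [MeasureTheory.integral_const_mul, integral_torusChar_mul]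
  simp_rw [h2]
  rw [tsum_eq_single l ?_]
  · rw [if_pos rfl, mul_one]
  · intro k hk
    rw [if_neg hk, mul_zero]

end Prop2

/-- Proposition 2. -/
theorem proposition_two (d : ℕ) (hd : 1 ≤ d) :
    ∃ c : ℝ, 0 < c ∧ ∀ (t : ℝ), 0 < t → t ≤ 1 → ∀ (N : ℕ), 1 ≤ N → ∀ x : Fin N → Torus d,
      c * ∑' k : {k : Fin d → ℤ // k ≠ 0 ∧ znorm k ≤ t ^ (-(1:ℝ)/2)},
            ‖∑ n, torusChar k.1 (x n)‖ ^ 2 ≤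
        ((eLpNorm (fun y => (N : ℝ) - ∑ n, heatKernel d t (y - x n)) ⊤ volume).toReal) ^ 2 := by
  classical
  refine ⟨Real.exp (-(8 * π ^ 2)), Real.exp_pos _, ?_⟩
  intro t ht ht1 N hN x
  haveI : Fact ((1 : ENNReal) ≤ 2) := ⟨one_le_two⟩
  set f : Torus d → ℝ := fun y => (N : ℝ) - ∑ n, heatKernel d t (y - x n) with hfdef
  set G : Torus d → ℂ := fun y => ∑' k : Fin d → ℤ,
      (Real.exp (-4 * π ^ 2 * znorm k ^ 2 * t) : ℂ) * torusChar k y *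
        (starRingEnd ℂ) (∑ n, torusChar k (x n)) with hGdef
  have hGbound : ∀ (k : Fin d → ℤ) (y : Torus d),
      ‖(Real.exp (-4 * π ^ 2 * znorm k ^ 2 * t) : ℂ) * torusChar k y *
        (starRingEnd ℂ) (∑ n, torusChar k (x n))‖
        ≤ Real.exp (-4 * π ^ 2 * znorm k ^ 2 * t) * (N : ℝ) := by
    intro k y
    rw [norm_mul, norm_mul, Prop2.norm_torusChar, mul_one, RCLike.norm_conj,
      Complex.norm_real, Real.norm_eq_abs, abs_of_pos (Real.exp_pos _)]
    exact mul_le_mul_of_nonneg_left (Prop2.norm_sum_char_le x k) (Real.exp_pos _).le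
  have hGcont : Continuous G := by
    rw [hGdef]
    apply continuous_tsum ?_ ((Prop2.summable_coef ht d).mul_right (N : ℝ)) hGbound
    intro k
    exact (continuous_const.mul (Prop2.torusChar_continuous k)).mul continuous_const
  have hfC : ∀ y : Torus d, ((f y : ℝ) : ℂ) = (N : ℂ) - G y := by
    intro y
    simp only [hfdef]
    rw [Complex.ofReal_sub, Prop2.sum_heatKernel_coe ht x y, Complex.ofReal_natCast, hGdef]
  have hfcont : Continuous f := by
    have hre : f = fun y => (N : ℝ) - (G y).re := by
      funext y
      have h2 := congrArg Complex.re (hfC y)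
      simpa using h2
    rw [hre]
    exact continuous_const.sub (Complex.continuous_re.comp hGcont)
  set fC : C(Torus d, ℂ) := ⟨fun y => ((f y : ℝ) : ℂ),
    Complex.continuous_ofReal.comp hfcont⟩ with hfCdef
  set FL : Lp ℂ 2 (volume : Measure (Torus d)) := ContinuousMap.toLp 2 volume ℂ fC with hFLdef
  have hinner : ∀ l : Fin d → ℤ, l ≠ 0 →
      @inner ℂ _ _ (ContinuousMap.toLp (E := ℂ) 2 volume ℂ
          (⟨torusChar l, Prop2.torusChar_continuous l⟩ : C(Torus d, ℂ))) FL
        = -((Real.exp (-4 * π ^ 2 * znorm l ^ 2 * t) : ℂ) *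
            (starRingEnd ℂ) (∑ n, torusChar l (x n))) := by
    intro l hl
    rw [hFLdef, ContinuousMap.inner_toLp]
    simp only [ContinuousMap.coe_mk, hfCdef]
    have h1 : ∀ y : Torus d, ((f y : ℝ) : ℂ) * (starRingEnd ℂ) (torusChar l y)
        = (N : ℂ) * (starRingEnd ℂ) (torusChar l y)
          - (starRingEnd ℂ) (torusChar l y) * G y := by
      intro y
      rw [hfC y]
      ring
    simp_rw [h1]
    have hint1 : Integrable (fun y : Torus d =>
        (N : ℂ) * (starRingEnd ℂ) (torusChar l y)) volume :=
      Prop2.integrable_of_continuous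
        (continuous_const.mul (continuous_star.comp (Prop2.torusChar_continuous l)))
    have hint2 : Integrable (fun y : Torus d =>
        (starRingEnd ℂ) (torusChar l y) * G y) volume :=
      Prop2.integrable_of_continuous
        ((continuous_star.comp (Prop2.torusChar_continuous l)).mul hGcont)
    rw [integral_sub hint1 hint2, MeasureTheory.integral_const_mul]
    have h2 : (∫ y : Torus d, (starRingEnd ℂ) (torusChar l y)) = 0 := by
      have h3 : ∀ y : Torus d, (starRingEnd ℂ) (torusChar l y) = torusChar (-l) y :=
        fun y => (Prop2.torusChar_neg l y).symm
      simp_rw [h3]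
      rw [Prop2.integral_torusChar, if_neg (by simpa using hl)]
    have h4 : (∫ y : Torus d, (starRingEnd ℂ) (torusChar l y) * G y)
        = (Real.exp (-4 * π ^ 2 * znorm l ^ 2 * t) : ℂ) *
            (starRingEnd ℂ) (∑ n, torusChar l (x n)) := by
      rw [hGdef]
      exact Prop2.integral_conj_char_mul_G ht x l
    rw [h2, h4, mul_zero, zero_sub]
  haveI hfinA : Finite {k : Fin d → ℤ // k ≠ 0 ∧ znorm k ≤ t ^ (-(1:ℝ)/2)} :=
    (Prop2.finite_freq (d := d) (t ^ (-(1:ℝ)/2))).to_subtype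
  haveI : Fintype {k : Fin d → ℤ // k ≠ 0 ∧ znorm k ≤ t ^ (-(1:ℝ)/2)} := Fintype.ofFinite _
  rw [tsum_fintype]
  set v : {k : Fin d → ℤ // k ≠ 0 ∧ znorm k ≤ t ^ (-(1:ℝ)/2)} →
      Lp ℂ 2 (volume : Measure (Torus d)) :=
    fun l => ContinuousMap.toLp 2 volume ℂ
      (⟨torusChar l.1, Prop2.torusChar_continuous l.1⟩ : C(Torus d, ℂ)) with hv
  have hON : Orthonormal ℂ v := by
    rw [orthonormal_iff_ite]
    intro i j
    simp only [hv]
    rw [ContinuousMap.inner_toLp]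
    simp only [ContinuousMap.coe_mk]
    simp_rw [mul_comm (torusChar j.1 _)]
    rw [Prop2.integral_torusChar_mul]
    by_cases h : i = j
    · subst h; rw [if_pos rfl, if_pos rfl]
    · rw [if_neg fun hh => h (Subtype.ext hh.symm), if_neg h]
  have bessel := hON.sum_inner_products_le (s := Finset.univ) FL
  have hterm : ∀ k : {k : Fin d → ℤ // k ≠ 0 ∧ znorm k ≤ t ^ (-(1:ℝ)/2)},
      Real.exp (-(8 * π ^ 2)) * ‖∑ n, torusChar k.1 (x n)‖ ^ 2
        ≤ ‖@inner ℂ _ _ (v k) FL‖ ^ 2 := by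
    intro k
    simp only [hv]
    rw [hinner k.1 k.2.1, norm_neg, norm_mul, RCLike.norm_conj, Complex.norm_real,
      Real.norm_eq_abs, abs_of_pos (Real.exp_pos _), mul_pow]
    have hz2 : znorm k.1 ^ 2 * t ≤ 1 := by
      have h1 : znorm k.1 ^ 2 ≤ (t ^ (-(1:ℝ)/2)) ^ 2 :=
        pow_le_pow_left₀ (Prop2.znorm_nonneg _) k.2.2 2
      have h2 : (t ^ (-(1:ℝ)/2)) ^ 2 = t⁻¹ := by
        rw [← Real.rpow_natCast (t ^ (-(1:ℝ)/2)) 2, ← Real.rpow_mul ht.le]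
        norm_num
        exact Real.rpow_neg_one t
      calc znorm k.1 ^ 2 * t ≤ t⁻¹ * t :=
            mul_le_mul_of_nonneg_right (h1.trans_eq h2) ht.le
        _ = 1 := inv_mul_cancel₀ ht.ne'
    refine mul_le_mul_of_nonneg_right ?_ (sq_nonneg _)
    rw [← Real.exp_nat_mul]
    apply Real.exp_le_exp.mpr
    push_cast
    nlinarith [sq_nonneg π, hz2]
  have hnormFL : ‖FL‖ = (eLpNorm f 2 volume).toReal := by
    rw [hFLdef, Lp.norm_def]
    congr 1
    rw [eLpNorm_congr_ae (fC.coeFn_toLp (p := 2) (𝕜 := ℂ) volume)]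
    apply eLpNorm_congr_norm_ae
    filter_upwards with y
    simp only [hfCdef, ContinuousMap.coe_mk]
    exact Complex.norm_real _
  have hmem : MemLp f ⊤ (volume : Measure (Torus d)) := by
    have hcs : HasCompactSupport f :=
      IsCompact.of_isClosed_subset isCompact_univ (isClosed_tsupport f) (Set.subset_univ _)
    exact hfcont.memLp_top_of_hasCompactSupport hcs volume
  have hle2 : (eLpNorm f 2 volume).toReal ≤ (eLpNorm f ⊤ volume).toReal := by
    apply ENNReal.toReal_mono hmem.eLpNorm_ne_top
    exact eLpNorm_le_eLpNorm_of_exponent_le le_top hfcont.aestronglyMeasurable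
  have step1 : Real.exp (-(8 * π ^ 2)) *
      ∑ k : {k : Fin d → ℤ // k ≠ 0 ∧ znorm k ≤ t ^ (-(1:ℝ)/2)}, ‖∑ n, torusChar k.1 (x n)‖ ^ 2
      ≤ ∑ k : {k : Fin d → ℤ // k ≠ 0 ∧ znorm k ≤ t ^ (-(1:ℝ)/2)},
          ‖@inner ℂ _ _ (v k) FL‖ ^ 2 := by
    rw [Finset.mul_sum]
    exact Finset.sum_le_sum fun k _ => hterm k
  have step2 : (‖FL‖ : ℝ) ^ 2 ≤ ((eLpNorm f ⊤ volume).toReal) ^ 2 := by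
    rw [hnormFL]
    exact pow_le_pow_left₀ ENNReal.toReal_nonneg hle2 2
  exact le_trans step1 (le_trans bessel step2)
end
end
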